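/- arXiv:2411.00218 — 3 statements merged into one kernel-verified Lean document; each statement's English description precedes it below -/
import Mathlib

section
/- Let M = (π₀, K, g) be a state-space model satisfying Assumption A2, and let {α_t}_{t∈ℕ} be a family of parametric nudging transformations. Then for every finite horizon T ≥ 1 there exists a sequence of positive parameters γ_1, …, γ_T such that the nudged model M^α built with the maps α_t(·, γ_t) satisfies p_T(y_{1:T} | M^α) ≥ p_T(y_{1:T} | M), i.e., the nudged model has Bayesian evidence at least as large as that of the original model. -/
open MeasureTheory ENNReal

namespace Nudging

variable {X : Type*} [MeasurableSpace X]

/-- Total variation norm `‖μ - ν‖_TV = |sup_F (μ-ν)(F) - inf_F (μ-ν)(F)|` of the difference of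
two (finite) measures. -/
noncomputable def tvDist (μ ν : Measure X) : ℝ :=
  ((⨆ (F : Set X) (_ : MeasurableSet F), (μ F - ν F)) +
   (⨆ (F : Set X) (_ : MeasurableSet F), (ν F - μ F))).toReal

/-- Supremum norm of a real-valued function. -/
noncomputable def supNorm {α : Type*} (f : α → ℝ) : ℝ := ⨆ x, |f x|

/-- The (normalised) filter measures `π_t` of a state-space model `(π0, K, g)`:
`π_0 = π0` and `π_t(f) = ξ_t(f g_t)/ξ_t(g_t)` where `ξ_t = K_t π_{t-1}`. -/
noncomputable def filt (π0 : Measure X) (K : ℕ → X → Measure X) (g : ℕ → X → ℝ) :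
    ℕ → Measure X
  | 0 => π0
  | t + 1 =>
      let ξ : Measure X := (filt π0 K g t).bind (K (t + 1))
      let ν : Measure X := ξ.withDensity fun x => ENNReal.ofReal (g (t + 1) x)
      (ν Set.univ)⁻¹ • ν

/-- The one-step-ahead predictive measure `ξ_t = K_t π_{t-1}` (for `t ≥ 1`). -/
noncomputable def pred (π0 : Measure X) (K : ℕ → X → Measure X) (g : ℕ → X → ℝ)
    (t : ℕ) : Measure X :=
  (filt π0 K g (t - 1)).bind (K t)

/-- The Bayesian evidence (marginal likelihood) `p_T(y_{1:T}|M) = ∏_{t=1}^T ξ_t(g_t)`. -/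
noncomputable def evidence (π0 : Measure X) (K : ℕ → X → Measure X) (g : ℕ → X → ℝ)
    (T : ℕ) : ℝ :=
  ∏ t ∈ Finset.Icc 1 T, ∫ x, g t x ∂(pred π0 K g t)

/-- The nudged kernel `K_t^α(x,·)`: the pushforward of `K_t(x,·)` under the map `a t`. -/
noncomputable def nudged (K : ℕ → X → Measure X) (a : ℕ → X → X) : ℕ → X → Measure X :=
  fun t x => (K t x).map (a t)

/-- The alternative nudged kernel `K̄_t^α(x,·) := K_t(α_{t-1}(x), ·)`. -/
noncomputable def altKernel (K : ℕ → X → Measure X) (a : ℕ → X → X) : ℕ → X → Measure X :=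
  fun t x => K t (a (t - 1) x)

/-- The modified likelihoods `g_t^α := g_t ∘ α_t` of the alternative nudged model. -/
def altG (g : ℕ → X → ℝ) (a : ℕ → X → X) : ℕ → X → ℝ := fun t x => g t (a t x)

/-- Dobrushin (induced) norm of a Markov kernel:
`‖K‖ = sup_{x,x'} ‖K(x,·) - K(x',·)‖_TV`. -/
noncomputable def dobNorm (K : X → Measure X) : ℝ :=
  ⨆ p : X × X, tvDist (K p.1) (K p.2)


open Filter Topology

section Aux
variable {X : Type*} [MeasurableSpace X]

/-- One-sided sup distance. -/
noncomputable def dsup (μ ν : Measure X) : ℝ≥0∞ :=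
  ⨆ (F : Set X) (_ : MeasurableSet F), (μ F - ν F)

lemma dsup_le_one (μ ν : Measure X) [IsProbabilityMeasure μ] : dsup μ ν ≤ 1 := by
  refine iSup₂_le fun F _ => ?_
  exact le_trans (tsub_le_self) (le_trans (measure_mono (Set.subset_univ F)) (le_of_eq measure_univ))

lemma measure_le_add_dsup (μ ν : Measure X) {F : Set X} (hF : MeasurableSet F) :
    μ F ≤ ν F + dsup μ ν := by
  rw [add_comm, ← tsub_le_iff_right]
  exact le_iSup₂ (f := fun (F : Set X) (_ : MeasurableSet F) => μ F - ν F) F hF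

lemma dsup_le_of_tvDist {μ ν : Measure X} [IsProbabilityMeasure μ] [IsProbabilityMeasure ν]
    {ε : ℝ} (h : tvDist μ ν ≤ ε) :
    dsup μ ν ≤ ENNReal.ofReal ε ∧ dsup ν μ ≤ ENNReal.ofReal ε := by
  have hfin : dsup μ ν + dsup ν μ ≠ ∞ := by
    refine ne_top_of_le_ne_top (by norm_num : (2 : ℝ≥0∞) ≠ ∞) ?_
    calc dsup μ ν + dsup ν μ ≤ 1 + 1 := add_le_add (dsup_le_one μ ν) (dsup_le_one ν μ)
    _ = 2 := by norm_num
  have heq : dsup μ ν + dsup ν μ = ENNReal.ofReal (tvDist μ ν) := by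
    rw [tvDist]; exact (ENNReal.ofReal_toReal hfin).symm
  have hle : dsup μ ν + dsup ν μ ≤ ENNReal.ofReal ε := heq ▸ ENNReal.ofReal_le_ofReal h
  exact ⟨le_trans le_self_add hle, le_trans le_add_self hle⟩

/-- Key total-variation bound for lower Lebesgue integrals of bounded functions. -/
lemma lintegral_le_lintegral_add_dsup (μ ν : Measure X)
    {f : X → ℝ≥0∞} (hf : Measurable f) {c : ℝ} (hc : 0 ≤ c)
    (hfc : ∀ x, f x ≤ ENNReal.ofReal c) :
    ∫⁻ x, f x ∂μ ≤ ∫⁻ x, f x ∂ν + ENNReal.ofReal c * dsup μ ν := by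
  set fr : X → ℝ := fun x => (f x).toReal with hfr
  have hfrm : Measurable fr := hf.ennreal_toReal
  have hfne : ∀ x, f x ≠ ∞ := fun x => ne_top_of_le_ne_top ENNReal.ofReal_ne_top (hfc x)
  have hofr : ∀ x, ENNReal.ofReal (fr x) = f x := fun x => ENNReal.ofReal_toReal (hfne x)
  have hfrc : ∀ x, fr x ≤ c := fun x => ENNReal.toReal_le_of_le_ofReal hc (hfc x)
  have layer : ∀ (ρ : Measure X), ∫⁻ x, f x ∂ρ = ∫⁻ t in Set.Ioi (0:ℝ), ρ {a | t < fr a} := by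
    intro ρ
    rw [show ∫⁻ x, f x ∂ρ = ∫⁻ x, ENNReal.ofReal (fr x) ∂ρ from lintegral_congr fun x => (hofr x).symm]
    exact lintegral_eq_lintegral_meas_lt ρ (Filter.Eventually.of_forall fun x => ENNReal.toReal_nonneg)
      hfrm.aemeasurable
  have hsplit : ∀ (ρ : Measure X), ∫⁻ t in Set.Ioi (0:ℝ), ρ {a | t < fr a}
      = (∫⁻ t in Set.Ioc (0:ℝ) c, ρ {a | t < fr a}) + ∫⁻ t in Set.Ioi c, ρ {a | t < fr a} := by
    intro ρ
    rw [← Set.Ioc_union_Ioi_eq_Ioi hc, Measure.restrict_union (Set.Ioc_disjoint_Ioi le_rfl)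
      measurableSet_Ioi, lintegral_add_measure]
  have hzero : ∀ (ρ : Measure X), ∫⁻ t in Set.Ioi c, ρ {a | t < fr a} = 0 := by
    intro ρ
    rw [setLIntegral_congr_fun measurableSet_Ioi
      (fun t (ht : c < t) => ?_), lintegral_zero]
    have : {a | t < fr a} = ∅ := by
      ext a; simp only [Set.mem_setOf_eq, Set.mem_empty_iff_false, iff_false, not_lt]
      exact le_trans (hfrc a) (le_of_lt ht)
    rw [this]; exact measure_empty
  calc ∫⁻ x, f x ∂μ = ∫⁻ t in Set.Ioc (0:ℝ) c, μ {a | t < fr a} := by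
        rw [layer μ, hsplit μ, hzero μ, add_zero]
    _ ≤ ∫⁻ t in Set.Ioc (0:ℝ) c, (ν {a | t < fr a} + dsup μ ν) := by
        refine lintegral_mono fun t => ?_
        exact measure_le_add_dsup μ ν (measurableSet_lt measurable_const hfrm)
    _ = (∫⁻ t in Set.Ioc (0:ℝ) c, ν {a | t < fr a}) + ENNReal.ofReal c * dsup μ ν := by
        rw [lintegral_add_right _ measurable_const, setLIntegral_const, Real.volume_Ioc,
          sub_zero, mul_comm]
    _ ≤ (∫⁻ t in Set.Ioi (0:ℝ), ν {a | t < fr a}) + ENNReal.ofReal c * dsup μ ν := by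
        gcongr
        exact Set.Ioc_subset_Ioi_self
    _ = ∫⁻ x, f x ∂ν + ENNReal.ofReal c * dsup μ ν := by rw [← layer ν]

end Aux

section Aux2
variable {X : Type*} [MeasurableSpace X]

lemma enn_inv_mul_le_one (a : ℝ≥0∞) : a⁻¹ * a ≤ 1 := by
  rcases eq_or_ne a 0 with h | h
  · simp [h]
  rcases eq_or_ne a ∞ with h' | h'
  · simp [h']
  · simp [ENNReal.inv_mul_cancel h h']

lemma bind_map_right (μ : Measure X) {k : X → Measure X} (hk : Measurable k)
    {a : X → X} (ha : Measurable a) :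
    μ.bind (fun x => (k x).map a) = (μ.bind k).map a := by
  have hm : Measurable fun x => (k x).map a := (Measure.measurable_map a ha).comp hk
  ext s hs
  rw [Measure.map_apply ha hs, Measure.bind_apply (ha hs) hk.aemeasurable, Measure.bind_apply hs hm.aemeasurable]
  exact lintegral_congr fun x => Measure.map_apply ha hs

lemma map_bind_left (μ : Measure X) {b : X → X} (hb : Measurable b)
    {k : X → Measure X} (hk : Measurable k) :
    (μ.map b).bind k = μ.bind (fun x => k (b x)) := by
  have hm : Measurable fun x => k (b x) := hk.comp hb
  have hcoe : ∀ {s : Set X}, MeasurableSet s → Measurable fun x => k x s :=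
    fun hs => (Measure.measurable_coe hs).comp hk
  ext s hs
  rw [Measure.bind_apply hs hk.aemeasurable, Measure.bind_apply hs hm.aemeasurable, lintegral_map (hcoe hs) hb]

lemma withDensity_map_comm (μ : Measure X) {a : X → X} (ha : Measurable a)
    {f : X → ℝ≥0∞} (hf : Measurable f) :
    (μ.map a).withDensity f = (μ.withDensity (fun x => f (a x))).map a := by
  ext s hs
  rw [withDensity_apply _ hs, Measure.map_apply ha hs, withDensity_apply _ (ha hs),
    Measure.restrict_map ha hs, lintegral_map hf ha]

/-- `idOr a`: the maps `a t` with `a 0` replaced by the identity. -/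
def idOr (a : ℕ → X → X) : ℕ → X → X := fun t x => if t = 0 then x else a t x

lemma idOr_measurable {a : ℕ → X → X} (ha : ∀ t, Measurable (a t)) (t : ℕ) :
    Measurable (idOr a t) := by
  cases t with
  | zero => unfold idOr; simpa using measurable_id'
  | succ t => unfold idOr; simpa using ha (t + 1)

/-- The shifted kernel `x ↦ K_t(α_{t-1}(x))` (with `α_0 = id`). -/
noncomputable def shiftKer (K : ℕ → X → Measure X) (a : ℕ → X → X) : ℕ → X → Measure X :=
  fun t x => K t (idOr a (t - 1) x)

lemma filt_succ (π0 : Measure X) (K : ℕ → X → Measure X) (g : ℕ → X → ℝ) (t : ℕ) :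
    filt π0 K g (t + 1)
      = ((((filt π0 K g t).bind (K (t+1))).withDensity
          (fun x => ENNReal.ofReal (g (t+1) x))) Set.univ)⁻¹ •
        (((filt π0 K g t).bind (K (t+1))).withDensity
          (fun x => ENNReal.ofReal (g (t+1) x))) := rfl

lemma bind_nudged (μ : Measure X) (K : ℕ → X → Measure X) (hK : ∀ t, Measurable (K t))
    (a : ℕ → X → X) (ha : ∀ t, Measurable (a t)) (t s : ℕ) :
    (μ.map (idOr a s)).bind (nudged K a t)
      = (μ.bind (fun x => K t (idOr a s x))).map (a t) := by
  have hker : Measurable fun x => K t (idOr a s x) := (hK t).comp (idOr_measurable ha s)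
  have h1 : (μ.map (idOr a s)).bind (nudged K a t)
      = μ.bind (fun x => (K t (idOr a s x)).map (a t)) :=
    map_bind_left μ (idOr_measurable ha s)
      ((Measure.measurable_map _ (ha t)).comp (hK t))
  rw [h1, bind_map_right μ hker (ha t)]

lemma filt_nudged (π0 : Measure X) (K : ℕ → X → Measure X) (hK : ∀ t, Measurable (K t))
    (g : ℕ → X → ℝ) (a : ℕ → X → X) (ha : ∀ t, Measurable (a t)) (hg : ∀ t, Measurable (g t)) :
    ∀ t, filt π0 (nudged K a) g t
      = (filt π0 (shiftKer K a) (altG g a) t).map (idOr a t) := by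
  intro t
  induction t with
  | zero =>
      simp only [filt, idOr, if_pos rfl]
      exact (Measure.map_id).symm
  | succ t ih =>
      have hbind : (filt π0 (nudged K a) g t).bind (nudged K a (t + 1))
          = ((filt π0 (shiftKer K a) (altG g a) t).bind (shiftKer K a (t + 1))).map (a (t + 1)) := by
        rw [ih, bind_nudged _ K hK a ha (t+1) t]
        rfl
      have hgm : Measurable fun x => ENNReal.ofReal (g (t+1) x) :=
        ENNReal.measurable_ofReal.comp (hg (t+1))
      rw [filt_succ, filt_succ, hbind, withDensity_map_comm _ (ha (t+1)) hgm]
      rw [Measure.map_apply (ha (t+1)) MeasurableSet.univ, Set.preimage_univ, ← Measure.map_smul]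
      rfl

lemma pred_nudged (π0 : Measure X) (K : ℕ → X → Measure X) (hK : ∀ t, Measurable (K t))
    (g : ℕ → X → ℝ) (a : ℕ → X → X) (ha : ∀ t, Measurable (a t)) (hg : ∀ t, Measurable (g t))
    (t : ℕ) (ht : 1 ≤ t) :
    pred π0 (nudged K a) g t = (pred π0 (shiftKer K a) (altG g a) t).map (a t) := by
  obtain ⟨s, rfl⟩ : ∃ s, t = s + 1 := ⟨t - 1, (Nat.succ_pred_eq_of_pos ht).symm⟩
  show (filt π0 (nudged K a) g s).bind (nudged K a (s+1)) = _
  rw [filt_nudged π0 K hK g a ha hg s, bind_nudged _ K hK a ha (s+1) s]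
  rfl

lemma evidence_nudged (π0 : Measure X) (K : ℕ → X → Measure X) (hK : ∀ t, Measurable (K t))
    (g : ℕ → X → ℝ) (a : ℕ → X → X) (ha : ∀ t, Measurable (a t)) (hg : ∀ t, Measurable (g t))
    (T : ℕ) :
    evidence π0 (nudged K a) g T
      = ∏ t ∈ Finset.Icc 1 T, ∫ x, altG g a t x ∂(pred π0 (shiftKer K a) (altG g a) t) := by
  refine Finset.prod_congr rfl fun t htm => ?_
  rw [pred_nudged π0 K hK g a ha hg t (Finset.mem_Icc.mp htm).1,
    integral_map (ha t).aemeasurable (hg t).aestronglyMeasurable]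
  rfl

lemma filt_univ_le (π0 : Measure X) [IsProbabilityMeasure π0] (K : ℕ → X → Measure X)
    (g : ℕ → X → ℝ) (t : ℕ) : filt π0 K g t Set.univ ≤ 1 := by
  cases t with
  | zero => exact le_of_eq (measure_univ (μ := π0))
  | succ t =>
      rw [filt_succ, Measure.smul_apply, smul_eq_mul]
      exact enn_inv_mul_le_one _

lemma pred_univ_le (π0 : Measure X) [IsProbabilityMeasure π0] (K : ℕ → X → Measure X)
    (hK : ∀ t, Measurable (K t)) (hKp : ∀ t x, IsProbabilityMeasure (K t x))
    (g : ℕ → X → ℝ) (t : ℕ) : pred π0 K g t Set.univ ≤ 1 := by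
  rw [pred, Measure.bind_apply MeasurableSet.univ (hK t).aemeasurable]
  calc ∫⁻ x, K t x Set.univ ∂(filt π0 K g (t-1))
      = ∫⁻ _, 1 ∂(filt π0 K g (t-1)) := lintegral_congr fun x => (hKp t x).measure_univ
    _ = filt π0 K g (t-1) Set.univ := lintegral_one
    _ ≤ 1 := filt_univ_le π0 K g (t-1)

lemma lintegral_le_of_le_const {μ : Measure X} (hμ : μ Set.univ ≤ 1)
    {f : X → ℝ≥0∞} {c : ℝ} (hfc : ∀ x, f x ≤ ENNReal.ofReal c) :
    ∫⁻ x, f x ∂μ ≤ ENNReal.ofReal c := by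
  calc ∫⁻ x, f x ∂μ ≤ ∫⁻ _, ENNReal.ofReal c ∂μ := lintegral_mono hfc
    _ = ENNReal.ofReal c * μ Set.univ := lintegral_const _
    _ ≤ ENNReal.ofReal c * 1 := by gcongr
    _ = ENNReal.ofReal c := mul_one _

end Aux2

section Aux3
variable {X : Type*} [MeasurableSpace X]

lemma tendsto_squeeze_enn {u v e : ℕ → ℝ≥0∞} {L : ℝ≥0∞} (hL : L ≠ ∞)
    (hv : Tendsto v atTop (𝓝 L)) (he : Tendsto e atTop (𝓝 0))
    (h1 : ∀ n, u n ≤ v n + e n) (h2 : ∀ n, v n ≤ u n + e n) :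
    Tendsto u atTop (𝓝 L) := by
  have hsub : Tendsto (fun n => v n - e n) atTop (𝓝 L) := by
    simpa using ENNReal.Tendsto.sub hv he (Or.inl hL)
  have hadd : Tendsto (fun n => v n + e n) atTop (𝓝 L) := by
    simpa using hv.add he
  exact tendsto_of_tendsto_of_tendsto_of_le_of_le hsub hadd
    (fun n => tsub_le_iff_right.mpr (h2 n)) h1

/-- Convergence of a sequence of measures tested against uniformly bounded,
pointwise convergent sequences of test functions. -/
def TendstoTest (μs : ℕ → Measure X) (μ : Measure X) : Prop :=
  ∀ (fs : ℕ → X → ℝ≥0∞) (f : X → ℝ≥0∞) (c : ℝ), 0 ≤ c →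
    (∀ n, Measurable (fs n)) → Measurable f →
    (∀ n x, fs n x ≤ ENNReal.ofReal c) → (∀ x, f x ≤ ENNReal.ofReal c) →
    (∀ x, Tendsto (fun n => fs n x) atTop (𝓝 (f x))) →
    Tendsto (fun n => ∫⁻ x, fs n x ∂(μs n)) atTop (𝓝 (∫⁻ x, f x ∂μ))

lemma tendstoTest_const (μ : Measure X) [IsFiniteMeasure μ] :
    TendstoTest (fun _ => μ) μ := by
  intro fs f c _ hfs _ hbc _ hconv
  refine tendsto_lintegral_of_dominated_convergence (fun _ => ENNReal.ofReal c) hfs ?_ ?_ ?_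
  · exact fun n => Eventually.of_forall (hbc n)
  · simp [lintegral_const, ENNReal.mul_ne_top ENNReal.ofReal_ne_top (measure_ne_top μ _)]
  · exact Eventually.of_forall hconv

lemma tendstoTest_bind {μs : ℕ → Measure X} {μ : Measure X}
    (hT : TendstoTest μs μ)
    {Ks : ℕ → X → Measure X} {K0 : X → Measure X}
    (hKs : ∀ n, Measurable (Ks n)) (hK0 : Measurable K0)
    (hKsp : ∀ n x, IsProbabilityMeasure (Ks n x)) (hK0p : ∀ x, IsProbabilityMeasure (K0 x))
    (htv1 : ∀ x, Tendsto (fun n => dsup (Ks n x) (K0 x)) atTop (𝓝 0))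
    (htv2 : ∀ x, Tendsto (fun n => dsup (K0 x) (Ks n x)) atTop (𝓝 0)) :
    TendstoTest (fun n => (μs n).bind (Ks n)) (μ.bind K0) := by
  intro fs f c hc hfs hf hbc hbf hconv
  have key : ∀ n, ∫⁻ x, fs n x ∂((μs n).bind (Ks n))
      = ∫⁻ x, (∫⁻ y, fs n y ∂(Ks n x)) ∂(μs n) :=
    fun n => Measure.lintegral_bind (hKs n).aemeasurable (hfs n).aemeasurable
  have key0 : ∫⁻ x, f x ∂(μ.bind K0) = ∫⁻ x, (∫⁻ y, f y ∂(K0 x)) ∂μ :=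
    Measure.lintegral_bind hK0.aemeasurable hf.aemeasurable
  simp only [key, key0]
  refine hT (fun n x => ∫⁻ y, fs n y ∂(Ks n x)) (fun x => ∫⁻ y, f y ∂(K0 x)) c hc
    (fun n => (Measure.measurable_lintegral (hfs n)).comp (hKs n))
    ((Measure.measurable_lintegral hf).comp hK0) ?_ ?_ ?_
  · intro n x
    haveI := hKsp n x
    exact lintegral_le_of_le_const (le_of_eq measure_univ) (hbc n)
  · intro x
    haveI := hK0p x
    exact lintegral_le_of_le_const (le_of_eq measure_univ) hbf
  · intro x
    haveI := hK0p x
    haveI := fun n => hKsp n x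
    have hv : Tendsto (fun n => ∫⁻ y, fs n y ∂(K0 x)) atTop (𝓝 (∫⁻ y, f y ∂(K0 x))) := by
      refine tendsto_lintegral_of_dominated_convergence (fun _ => ENNReal.ofReal c) hfs ?_ ?_ ?_
      · exact fun n => Eventually.of_forall (hbc n)
      · simp [lintegral_const, ENNReal.mul_ne_top ENNReal.ofReal_ne_top (measure_ne_top _ _)]
      · exact Eventually.of_forall hconv
    have hLne : (∫⁻ y, f y ∂(K0 x)) ≠ ∞ :=
      ne_top_of_le_ne_top ENNReal.ofReal_ne_top
        (lintegral_le_of_le_const (le_of_eq measure_univ) hbf)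
    have he : Tendsto (fun n => ENNReal.ofReal c * (dsup (Ks n x) (K0 x) + dsup (K0 x) (Ks n x)))
        atTop (𝓝 0) := by
      have := ENNReal.Tendsto.const_mul (a := ENNReal.ofReal c) ((htv1 x).add (htv2 x))
        (Or.inr ENNReal.ofReal_ne_top)
      simpa using this
    refine tendsto_squeeze_enn hLne hv he (fun n => ?_) (fun n => ?_)
    · calc ∫⁻ y, fs n y ∂(Ks n x)
          ≤ ∫⁻ y, fs n y ∂(K0 x) + ENNReal.ofReal c * dsup (Ks n x) (K0 x) :=
            lintegral_le_lintegral_add_dsup _ _ (hfs n) hc (hbc n)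
        _ ≤ _ := by gcongr; · exact le_self_add
    · calc ∫⁻ y, fs n y ∂(K0 x)
          ≤ ∫⁻ y, fs n y ∂(Ks n x) + ENNReal.ofReal c * dsup (K0 x) (Ks n x) :=
            lintegral_le_lintegral_add_dsup _ _ (hfs n) hc (hbc n)
        _ ≤ _ := by gcongr; · exact le_add_self

lemma tendstoTest_norm {ξs : ℕ → Measure X} {ξ : Measure X}
    (hT : TendstoTest ξs ξ)
    {ws : ℕ → X → ℝ≥0∞} {w : X → ℝ≥0∞} {cw : ℝ} (hcw : 0 ≤ cw)
    (hws : ∀ n, Measurable (ws n)) (hw : Measurable w)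
    (hbws : ∀ n x, ws n x ≤ ENNReal.ofReal cw) (hbw : ∀ x, w x ≤ ENNReal.ofReal cw)
    (hwconv : ∀ x, Tendsto (fun n => ws n x) atTop (𝓝 (w x)))
    (hpos : (ξ.withDensity w) Set.univ ≠ 0) (hfin : (ξ.withDensity w) Set.univ ≠ ∞) :
    TendstoTest
      (fun n => (((ξs n).withDensity (ws n)) Set.univ)⁻¹ • ((ξs n).withDensity (ws n)))
      (((ξ.withDensity w) Set.univ)⁻¹ • (ξ.withDensity w)) := by
  intro fs f c hc hfs hf hbc hbf hconv
  have hwd : ∀ n (h : X → ℝ≥0∞), Measurable h →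
      ∫⁻ x, h x ∂((ξs n).withDensity (ws n)) = ∫⁻ x, h x * ws n x ∂(ξs n) := by
    intro n h hh
    rw [lintegral_withDensity_eq_lintegral_mul _ (hws n) hh]
    exact lintegral_congr fun x => mul_comm _ _
  have hwd0 : ∀ (h : X → ℝ≥0∞), Measurable h →
      ∫⁻ x, h x ∂(ξ.withDensity w) = ∫⁻ x, h x * w x ∂ξ := by
    intro h hh
    rw [lintegral_withDensity_eq_lintegral_mul _ hw hh]
    exact lintegral_congr fun x => mul_comm _ _
  have hnum : Tendsto (fun n => ∫⁻ x, fs n x ∂((ξs n).withDensity (ws n)))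
      atTop (𝓝 (∫⁻ x, f x ∂(ξ.withDensity w))) := by
    simp only [fun n => hwd n (fs n) (hfs n), hwd0 f hf]
    refine hT (fun n x => fs n x * ws n x) (fun x => f x * w x) (c * cw)
      (mul_nonneg hc hcw) (fun n => (hfs n).mul (hws n)) (hf.mul hw) ?_ ?_ ?_
    · intro n x
      rw [ENNReal.ofReal_mul hc]
      exact mul_le_mul' (hbc n x) (hbws n x)
    · intro x
      rw [ENNReal.ofReal_mul hc]
      exact mul_le_mul' (hbf x) (hbw x)
    · intro x
      have h1 : f x ≠ ∞ := ne_top_of_le_ne_top ENNReal.ofReal_ne_top (hbf x)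
      have h2 : w x ≠ ∞ := ne_top_of_le_ne_top ENNReal.ofReal_ne_top (hbw x)
      exact ENNReal.Tendsto.mul (hconv x) (Or.inr h2) (hwconv x) (Or.inr h1)
  have hmass : Tendsto (fun n => ((ξs n).withDensity (ws n)) Set.univ)
      atTop (𝓝 ((ξ.withDensity w) Set.univ)) := by
    have hround : ∀ (ρ : Measure X) (h : X → ℝ≥0∞) (hh : Measurable h),
        (ρ.withDensity h) Set.univ = ∫⁻ x, h x ∂ρ := by
      intro ρ h hh
      rw [withDensity_apply _ MeasurableSet.univ, Measure.restrict_univ]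
    simp only [fun n => hround (ξs n) (ws n) (hws n), hround ξ w hw]
    exact hT ws w cw hcw hws hw hbws hbw hwconv
  have hinv : Tendsto (fun n => (((ξs n).withDensity (ws n)) Set.univ)⁻¹)
      atTop (𝓝 (((ξ.withDensity w) Set.univ)⁻¹)) := ENNReal.tendsto_inv_iff.2 hmass
  have hres : ∀ n, ∫⁻ x, fs n x ∂((((ξs n).withDensity (ws n)) Set.univ)⁻¹ •
      ((ξs n).withDensity (ws n)))
      = (((ξs n).withDensity (ws n)) Set.univ)⁻¹ * ∫⁻ x, fs n x ∂((ξs n).withDensity (ws n)) :=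
    fun n => lintegral_smul_measure _ _
  have hres0 : ∫⁻ x, f x ∂((((ξ.withDensity w) Set.univ)⁻¹ • (ξ.withDensity w)))
      = ((ξ.withDensity w) Set.univ)⁻¹ * ∫⁻ x, f x ∂(ξ.withDensity w) :=
    lintegral_smul_measure _ _
  simp only [hres, hres0]
  exact ENNReal.Tendsto.mul hinv (Or.inr (by
      rw [hwd0 f hf]
      exact ne_top_of_le_ne_top (ENNReal.mul_ne_top ENNReal.ofReal_ne_top hfin) (by
        calc ∫⁻ x, f x * w x ∂ξ ≤ ∫⁻ x, ENNReal.ofReal c * w x ∂ξ := by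
              refine lintegral_mono fun x => mul_le_mul' (hbf x) le_rfl
          _ = ENNReal.ofReal c * ∫⁻ x, w x ∂ξ := lintegral_const_mul _ hw
          _ = ENNReal.ofReal c * (ξ.withDensity w) Set.univ := by
              rw [withDensity_apply _ MeasurableSet.univ, Measure.restrict_univ])))
    hnum (Or.inr (ENNReal.inv_ne_top.mpr hpos))

end Aux3

/-- **Theorem 1 (evidence increase by nudging).**
Let `M = (π0, K, g)` be a state-space model satisfying Assumption A2 and let
`{α_t}` be a family of parametric nudging transformations.  Then for every finite
horizon `T ≥ 1` there is a sequence of positive parameters `γ_1, …, γ_T` such that the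
nudged model `M^α` (built from the maps `α_t(·, γ_t)`) has Bayesian evidence at least
as large as that of `M`: `p_T(y_{1:T} | M^α) ≥ p_T(y_{1:T} | M)`. -/
theorem nudging_increases_evidence
    {d : ℕ}
    (π0 : Measure (EuclideanSpace ℝ (Fin d))) (hπ0 : IsProbabilityMeasure π0)
    (K : ℕ → EuclideanSpace ℝ (Fin d) → Measure (EuclideanSpace ℝ (Fin d)))
    (hKmeas : ∀ t, Measurable (K t))
    (hKprob : ∀ t x, IsProbabilityMeasure (K t x))
    (g : ℕ → EuclideanSpace ℝ (Fin d) → ℝ)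
    (hg0 : ∀ t x, 0 ≤ g t x)
    -- Assumption A2 (i): the likelihoods are continuous and bounded
    (hgcont : ∀ t, Continuous (g t))
    (hgbdd : ∀ t, ∃ C : ℝ, ∀ x, g t x ≤ C)
    -- Assumption A2 (ii): the kernels are continuous in total variation
    (hKtv : ∀ t (x : EuclideanSpace ℝ (Fin d)), ∀ ε > (0 : ℝ), ∃ δ > (0 : ℝ),
        ∀ x', ‖x - x'‖ ≤ δ → tvDist (K t x) (K t x') ≤ ε)
    -- `{α_t}` is a family of parametric nudging transformations:
    (α : ℕ → EuclideanSpace ℝ (Fin d) → ℝ → EuclideanSpace ℝ (Fin d))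
    (hαmeas : ∀ t γ, Measurable fun x => α t x γ)
    -- (i) continuity in `γ` and `α_t(x,γ) → x` as `γ → 0`
    (hαcont : ∀ t x, ContinuousOn (fun γ => α t x γ) (Set.Ici 0))
    (hα0 : ∀ t x, α t x 0 = x)
    -- (ii) `g_t(α_t(x,γ)) ≥ g_t(x)` on `𝒳 × [0,Γ_t]`
    (Γ : ℕ → ℝ) (hΓ : ∀ t, 0 < Γ t)
    (hinc : ∀ t x, ∀ γ ∈ Set.Icc (0 : ℝ) (Γ t), g t x ≤ g t (α t x γ))
    -- (iii) `Δ_{g_t}(γ) > 0` for `γ ∈ (0,Γ_t]`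
    (hΔpos : ∀ t, ∀ γ ∈ Set.Ioc (0 : ℝ) (Γ t),
        0 < ∫ x, (g t (α t x γ) - g t x) ∂(pred π0 K g t))
    (T : ℕ) (hT : 1 ≤ T) :
    ∃ γ : ℕ → ℝ, (∀ t, 0 < γ t) ∧
      evidence π0 K g T ≤
        evidence π0 (nudged K fun t x => α t x (γ t)) g T := by
  classical
  haveI := hπ0
  have hgm : ∀ t, Measurable (g t) := fun t => (hgcont t).measurable
  obtain ⟨C, hC⟩ : ∃ C : ℕ → ℝ, ∀ t x, g t x ≤ C t := by
    choose C hC using hgbdd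
    exact ⟨C, hC⟩
  have hC0 : ∀ t, 0 ≤ C t := fun t => le_trans (hg0 t 0) (hC t 0)
  -- trivial case where the original evidence is nonpositive
  by_cases hE : 0 < evidence π0 K g T
  swap
  · refine ⟨fun t => Γ t, hΓ, ?_⟩
    have h1 : evidence π0 K g T ≤ 0 := not_lt.mp hE
    have h2 : 0 ≤ evidence π0 (nudged K fun t x => α t x (Γ t)) g T :=
      Finset.prod_nonneg fun t _ => integral_nonneg fun x => hg0 t x
    linarith
  -- all the factors of the original evidence are positive
  have hfac : ∀ t ∈ Finset.Icc 1 T, 0 < ∫ x, g t x ∂(pred π0 K g t) := by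
    intro t htm
    rcases lt_or_eq_of_le (integral_nonneg fun x => hg0 t x :
        (0:ℝ) ≤ ∫ x, g t x ∂(pred π0 K g t)) with h | h
    · exact h
    · exfalso
      have hzero : evidence π0 K g T = 0 := Finset.prod_eq_zero htm h.symm
      rw [hzero] at hE
      exact lt_irrefl 0 hE
  obtain ⟨S, rfl⟩ : ∃ S, T = S + 1 := ⟨T - 1, (Nat.succ_pred_eq_of_pos hT).symm⟩
  set T := S + 1 with hTdef
  -- the vanishing sequence of parameters (with a fixed parameter `Γ T` at time `T`)
  set γs : ℕ → ℕ → ℝ := fun n t => if t = T then Γ T else 1 / (n + 1 : ℝ) with hγs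
  have hγpos : ∀ n t, 0 < γs n t := by
    intro n t
    by_cases h : t = T <;> simp [hγs, h, hΓ T]
    · positivity
  -- measurability of the nudging maps
  have hmeas_as : ∀ (n t : ℕ), Measurable fun x => α t x (γs n t) := fun n t => hαmeas t _
  -- the limit along the sequence of the nudging maps at times `t ≠ T`
  have hα_lim : ∀ s x, s ≠ T → Tendsto (fun n => α s x (γs n s)) atTop (𝓝 x) := by
    intro s x hs
    have h1 : Tendsto (fun n : ℕ => γs n s) atTop (𝓝[Set.Ici (0:ℝ)] 0) := by
      simp only [hγs, if_neg hs]
      rw [tendsto_nhdsWithin_iff]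
      refine ⟨tendsto_one_div_add_atTop_nhds_zero_nat, Eventually.of_forall fun n => ?_⟩
      have : (0:ℝ) < n + 1 := by positivity
      exact Set.mem_Ici.mpr (by positivity)
    have h2 : ContinuousWithinAt (fun γ => α s x γ) (Set.Ici 0) 0 :=
      (hαcont s x) 0 Set.self_mem_Ici
    have h3 := h2.tendsto.comp h1
    rwa [hα0 s x] at h3
  have hg_lim : ∀ s x, s ≠ T →
      Tendsto (fun n => ENNReal.ofReal (g s (α s x (γs n s)))) atTop
        (𝓝 (ENNReal.ofReal (g s x))) := by
    intro s x hs
    exact (ENNReal.continuous_ofReal.tendsto _).comp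
      (((hgcont s).tendsto x).comp (hα_lim s x hs))
  -- total-variation convergence of the shifted kernels
  have htvz : ∀ (s : ℕ) (x : EuclideanSpace ℝ (Fin d)) (u : ℕ → EuclideanSpace ℝ (Fin d)),
      Tendsto u atTop (𝓝 x) →
      Tendsto (fun n => dsup (K s (u n)) (K s x)) atTop (𝓝 0) ∧
      Tendsto (fun n => dsup (K s x) (K s (u n))) atTop (𝓝 0) := by
    intro s x u hu
    have key : ∀ ε : ℝ≥0∞, 0 < ε → ∀ᶠ n in atTop,
        dsup (K s (u n)) (K s x) ≤ ε ∧ dsup (K s x) (K s (u n)) ≤ ε := by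
      intro ε hε
      rcases eq_or_ne ε ⊤ with rfl | hne
      · exact Eventually.of_forall fun n => ⟨le_top, le_top⟩
      have hεr : 0 < ε.toReal := ENNReal.toReal_pos hε.ne' hne
      obtain ⟨δ, hδ, hδε⟩ := hKtv s x ε.toReal hεr
      have hnorm : Tendsto (fun n => ‖x - u n‖) atTop (𝓝 0) := by
        have h1 := tendsto_iff_norm_sub_tendsto_zero.mp hu
        simpa [norm_sub_rev] using h1
      have hev : ∀ᶠ n in atTop, ‖x - u n‖ ≤ δ :=
        hnorm.eventually (eventually_le_nhds hδ)
      refine hev.mono fun n hn => ?_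
      have htv := hδε (u n) hn
      haveI := hKprob s (u n); haveI := hKprob s x
      have h2 := dsup_le_of_tvDist htv
      rw [ENNReal.ofReal_toReal hne] at h2
      exact ⟨h2.2, h2.1⟩
    constructor
    · rw [ENNReal.tendsto_nhds_zero]
      exact fun ε hε => (key ε hε).mono fun n h => h.1
    · rw [ENNReal.tendsto_nhds_zero]
      exact fun ε hε => (key ε hε).mono fun n h => h.2
  -- convergence (against test functions) of the filters of the shifted models
  have hfiltT : ∀ t, t ≤ S →
      TendstoTest
        (fun n => filt π0 (shiftKer K (fun s x => α s x (γs n s)))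
          (altG g (fun s x => α s x (γs n s))) t)
        (filt π0 K g t) := by
    intro t
    induction t with
    | zero => exact fun _ => tendstoTest_const π0
    | succ t ih =>
        intro h
        have ht' : t ≤ S := le_trans (Nat.le_succ t) h
        have htT : t ≠ T := by omega
        have ht1T : t + 1 ≠ T := by omega
        -- the bind step
        have hbindT : TendstoTest
            (fun n => (filt π0 (shiftKer K (fun s x => α s x (γs n s)))
              (altG g (fun s x => α s x (γs n s))) t).bind
              (shiftKer K (fun s x => α s x (γs n s)) (t+1)))
            ((filt π0 K g t).bind (K (t+1))) := by
          refine tendstoTest_bind (ih ht')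
            (fun n => (hKmeas (t+1)).comp (idOr_measurable (hmeas_as n) t))
            (hKmeas (t+1)) (fun n x => hKprob _ _) (fun x => hKprob _ _) ?_ ?_
          · intro x
            refine ((htvz (t+1) x _ ?_).1)
            cases t with
            | zero => simpa [idOr] using tendsto_const_nhds
            | succ r => simpa [idOr] using hα_lim (r+1) x htT
          · intro x
            refine ((htvz (t+1) x _ ?_).2)
            cases t with
            | zero => simpa [idOr] using tendsto_const_nhds
            | succ r => simpa [idOr] using hα_lim (r+1) x htT
        -- positivity and finiteness of the normalising constant in the limit
        have hmassfin : (((filt π0 K g t).bind (K (t+1))).withDensity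
            (fun x => ENNReal.ofReal (g (t+1) x))) Set.univ ≠ ∞ := by
          rw [withDensity_apply _ MeasurableSet.univ, Measure.restrict_univ]
          refine ne_top_of_le_ne_top ENNReal.ofReal_ne_top
            (lintegral_le_of_le_const ?_ fun x => ENNReal.ofReal_le_ofReal (hC (t+1) x))
          exact pred_univ_le π0 K hKmeas hKprob g (t+1)
        have hmasspos : (((filt π0 K g t).bind (K (t+1))).withDensity
            (fun x => ENNReal.ofReal (g (t+1) x))) Set.univ ≠ 0 := by
          rw [withDensity_apply _ MeasurableSet.univ, Measure.restrict_univ]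
          intro hzero
          have hpos := hfac (t+1) (Finset.mem_Icc.mpr ⟨Nat.succ_le_succ (Nat.zero_le t), by omega⟩)
          rw [integral_eq_lintegral_of_nonneg_ae (Eventually.of_forall fun x => hg0 (t+1) x)
            (hgm (t+1)).aestronglyMeasurable] at hpos
          have : pred π0 K g (t+1) = (filt π0 K g t).bind (K (t+1)) := rfl
          rw [this, hzero] at hpos
          simp at hpos
        exact tendstoTest_norm hbindT (hC0 (t+1))
          (fun n => ENNReal.measurable_ofReal.comp ((hgm (t+1)).comp (hmeas_as n (t+1))))
          (ENNReal.measurable_ofReal.comp (hgm (t+1)))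
          (fun n x => ENNReal.ofReal_le_ofReal (hC (t+1) _))
          (fun x => ENNReal.ofReal_le_ofReal (hC (t+1) x))
          (fun x => hg_lim (t+1) x ht1T) hmasspos hmassfin
  -- the limit weights (identity at all times except `T`, nudged with `Γ T` at time `T`)
  set wlim : ℕ → EuclideanSpace ℝ (Fin d) → ℝ :=
    fun t x => g t (α t x (if t = T then Γ T else 0)) with hwlim
  have hwlim_meas : ∀ t, Measurable (wlim t) := fun t => (hgm t).comp (hαmeas t _)
  have hwlim0 : ∀ t x, 0 ≤ wlim t x := fun t x => hg0 t _
  have hwlimC : ∀ t x, wlim t x ≤ C t := fun t x => hC t _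
  -- convergence of the lintegral version of each evidence factor
  have hfactor : ∀ t, 1 ≤ t → t ≤ T →
      Tendsto (fun n => ∫⁻ x, ENNReal.ofReal (g t (α t x (γs n t)))
          ∂(pred π0 (shiftKer K (fun s x => α s x (γs n s)))
            (altG g (fun s x => α s x (γs n s))) t)) atTop
        (𝓝 (∫⁻ x, ENNReal.ofReal (wlim t x) ∂(pred π0 K g t))) := by
    intro t h1t htT'
    obtain ⟨s, rfl⟩ : ∃ s, t = s + 1 := ⟨t - 1, (Nat.succ_pred_eq_of_pos h1t).symm⟩
    have hsS : s ≤ S := by omega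
    have hsT : s ≠ T := by omega
    have hbindT : TendstoTest
        (fun n => (filt π0 (shiftKer K (fun s' x => α s' x (γs n s')))
          (altG g (fun s' x => α s' x (γs n s'))) s).bind
          (shiftKer K (fun s' x => α s' x (γs n s')) (s+1)))
        ((filt π0 K g s).bind (K (s+1))) := by
      refine tendstoTest_bind (hfiltT s hsS)
        (fun n => (hKmeas (s+1)).comp (idOr_measurable (hmeas_as n) s))
        (hKmeas (s+1)) (fun n x => hKprob _ _) (fun x => hKprob _ _) ?_ ?_
      · intro x
        refine (htvz (s+1) x _ ?_).1
        cases s with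
        | zero => simp [idOr]
        | succ r => simpa [idOr] using hα_lim (r+1) x hsT
      · intro x
        refine (htvz (s+1) x _ ?_).2
        cases s with
        | zero => simp [idOr]
        | succ r => simpa [idOr] using hα_lim (r+1) x hsT
    refine hbindT (fun n x => ENNReal.ofReal (g (s+1) (α (s+1) x (γs n (s+1)))))
      (fun x => ENNReal.ofReal (wlim (s+1) x)) (C (s+1)) (hC0 _)
      (fun n => ENNReal.measurable_ofReal.comp ((hgm (s+1)).comp (hmeas_as n (s+1))))
      (ENNReal.measurable_ofReal.comp (hwlim_meas (s+1)))
      (fun n x => ENNReal.ofReal_le_ofReal (hC (s+1) _))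
      (fun x => ENNReal.ofReal_le_ofReal (hwlimC (s+1) x)) ?_
    intro x
    by_cases hsT1 : s + 1 = T
    · have hconst : ∀ n, γs n (s+1) = Γ T := fun n => if_pos hsT1
      simp only [hconst, hwlim, if_pos hsT1]
      exact tendsto_const_nhds
    · have h := hg_lim (s+1) x hsT1
      simpa only [hwlim, if_neg hsT1, hα0] using h
  -- conversion between Bochner integrals and lower Lebesgue integrals
  have hconv_int : ∀ (μ : Measure (EuclideanSpace ℝ (Fin d))) (f : EuclideanSpace ℝ (Fin d) → ℝ),
      Measurable f → (∀ x, 0 ≤ f x) →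
      ∫ x, f x ∂μ = (∫⁻ x, ENNReal.ofReal (f x) ∂μ).toReal := by
    intro μ f hm h0
    rw [integral_eq_lintegral_of_nonneg_ae (Eventually.of_forall h0) hm.aestronglyMeasurable]
  have hΛfin : ∀ t, (∫⁻ x, ENNReal.ofReal (wlim t x) ∂(pred π0 K g t)) ≠ ∞ :=
    fun t => ne_top_of_le_ne_top ENNReal.ofReal_ne_top
      (lintegral_le_of_le_const (pred_univ_le π0 K hKmeas hKprob g t)
        (fun x => ENNReal.ofReal_le_ofReal (hwlimC t x)))
  -- real-valued factor convergence
  have hfactR : ∀ t ∈ Finset.Icc 1 T,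
      Tendsto (fun n => ∫ x, altG g (fun s x => α s x (γs n s)) t x
          ∂(pred π0 (shiftKer K (fun s x => α s x (γs n s)))
            (altG g (fun s x => α s x (γs n s))) t)) atTop
        (𝓝 (∫ x, wlim t x ∂(pred π0 K g t))) := by
    intro t htm
    obtain ⟨h1t, htT'⟩ := Finset.mem_Icc.mp htm
    have h := (ENNReal.tendsto_toReal (hΛfin t)).comp (hfactor t h1t htT')
    have e1 : (fun n => ∫ x, altG g (fun s x => α s x (γs n s)) t x
        ∂(pred π0 (shiftKer K (fun s x => α s x (γs n s)))
          (altG g (fun s x => α s x (γs n s))) t))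
        = fun n => (∫⁻ x, ENNReal.ofReal (g t (α t x (γs n t)))
          ∂(pred π0 (shiftKer K (fun s x => α s x (γs n s)))
            (altG g (fun s x => α s x (γs n s))) t)).toReal :=
      funext fun n => hconv_int _ _ ((hgm t).comp (hmeas_as n t)) (fun x => hg0 t _)
    rw [e1, hconv_int _ _ (hwlim_meas t) (hwlim0 t)]
    exact h
  -- convergence of the full evidence of the nudged models
  have hEvTend : Tendsto (fun n => evidence π0 (nudged K fun t x => α t x (γs n t)) g T) atTop
      (𝓝 (∏ t ∈ Finset.Icc 1 T, ∫ x, wlim t x ∂(pred π0 K g t))) := by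
    have hrw : ∀ n, evidence π0 (nudged K fun t x => α t x (γs n t)) g T
        = ∏ t ∈ Finset.Icc 1 T, ∫ x, altG g (fun s x => α s x (γs n s)) t x
            ∂(pred π0 (shiftKer K (fun s x => α s x (γs n s)))
              (altG g (fun s x => α s x (γs n s))) t) :=
      fun n => evidence_nudged π0 K hKmeas g _ (hmeas_as n) hgm T
    simp only [hrw]
    exact tendsto_finset_prod _ fun t ht => hfactR t ht
  -- the limit is strictly larger than the original evidence
  have hL_gt : evidence π0 K g T < ∏ t ∈ Finset.Icc 1 T, ∫ x, wlim t x ∂(pred π0 K g t) := by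
    have hsplitL : ∏ t ∈ Finset.Icc 1 T, ∫ x, wlim t x ∂(pred π0 K g t)
        = (∏ t ∈ Finset.Icc 1 S, ∫ x, wlim t x ∂(pred π0 K g t))
            * ∫ x, wlim T x ∂(pred π0 K g T) := by
      rw [hTdef]
      exact Finset.prod_Icc_succ_top (by omega) _
    have hsplitE : evidence π0 K g T
        = (∏ t ∈ Finset.Icc 1 S, ∫ x, g t x ∂(pred π0 K g t))
            * ∫ x, g T x ∂(pred π0 K g T) := by
      rw [evidence, hTdef]
      exact Finset.prod_Icc_succ_top (by omega) _
    have hsame : ∀ t ∈ Finset.Icc 1 S,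
        ∫ x, wlim t x ∂(pred π0 K g t) = ∫ x, g t x ∂(pred π0 K g t) := by
      intro t htm
      have htne : t ≠ T := by
        have := (Finset.mem_Icc.mp htm).2; omega
      simp only [hwlim, if_neg htne, hα0]
    have hP : 0 < ∏ t ∈ Finset.Icc 1 S, ∫ x, g t x ∂(pred π0 K g t) :=
      Finset.prod_pos fun t htm => hfac t (Finset.mem_Icc.mpr
        ⟨(Finset.mem_Icc.mp htm).1, by have := (Finset.mem_Icc.mp htm).2; omega⟩)
    haveI : IsFiniteMeasure (pred π0 K g T) :=
      ⟨lt_of_le_of_lt (pred_univ_le π0 K hKmeas hKprob g T) ENNReal.one_lt_top⟩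
    have hintb : ∀ (f : EuclideanSpace ℝ (Fin d) → ℝ), Measurable f → (∀ x, 0 ≤ f x) →
        (∀ x, f x ≤ C T) → Integrable f (pred π0 K g T) := by
      intro f hm h0 hb
      refine (integrable_const (C T)).mono' hm.aestronglyMeasurable
        (Eventually.of_forall fun x => ?_)
      rw [Real.norm_eq_abs, abs_of_nonneg (h0 x)]
      exact hb x
    have hint1 : Integrable (fun x => g T (α T x (Γ T))) (pred π0 K g T) :=
      hintb _ ((hgm T).comp (hαmeas T _)) (fun x => hg0 T _) (fun x => hC T _)
    have hint2 : Integrable (fun x => g T x) (pred π0 K g T) :=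
      hintb _ (hgm T) (fun x => hg0 T x) (fun x => hC T x)
    have hgain : ∫ x, g T x ∂(pred π0 K g T) < ∫ x, g T (α T x (Γ T)) ∂(pred π0 K g T) := by
      have hdiff := hΔpos T (Γ T) ⟨hΓ T, le_rfl⟩
      rw [integral_sub hint1 hint2] at hdiff
      linarith
    have hwT : ∫ x, wlim T x ∂(pred π0 K g T) = ∫ x, g T (α T x (Γ T)) ∂(pred π0 K g T) := by
      simp only [hwlim, eq_self_iff_true, if_true]
    rw [hsplitL, hsplitE, Finset.prod_congr rfl hsame, hwT]
    exact mul_lt_mul_of_pos_left hgain hP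
  obtain ⟨n, hn⟩ := (hEvTend.eventually (eventually_gt_nhds hL_gt)).exists
  exact ⟨γs n, hγpos n, le_of_lt hn⟩

end Nudging
end

section
/- Let M = (π₀, K, g) be a state-space model and, for t = 1,…,T, let the gradient-ascent nudging transformation be α_t(x, γ) := x + γ∇log g_t(x). Assume: (a) |∂ log g_t(x)/∂x_i| < ∞ for every coordinate i and every t ∈ {1,…,T}; (b) each log g_t is differentiable with L_t-Lipschitz continuous gradient; (c) for each t there is a set A_t ⊆ 𝒳 with ξ_t(A_t) > 0 on which ∇log g_t(x) ≠ 0; and (d) each kernel K_t is continuous in total variation (Assumption A2(ii)) and each g_t is continuous and bounded. Then there exists a sequence of positive step sizes γ_1,…,γ_T such that p_T(y_{1:T} | M^α) ≥ p_T(y_{1:T} | M). -/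
open MeasureTheory ENNReal

namespace Nudging

variable {X : Type*} [MeasurableSpace X]

section TVlemmas
open Filter

variable {X : Type*} [MeasurableSpace X]

lemma tvDist_nonneg (μ ν : Measure X) : 0 ≤ tvDist μ ν := ENNReal.toReal_nonneg

lemma tvDist_comm (μ ν : Measure X) : tvDist μ ν = tvDist ν μ := by
  unfold tvDist; rw [add_comm]

lemma tv_sup_le_one (μ ν : Measure X) [IsProbabilityMeasure μ] :
    (⨆ (F : Set X) (_ : MeasurableSet F), (μ F - ν F)) ≤ 1 := by
  refine iSup_le fun F => iSup_le fun _ => ?_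
  exact le_trans tsub_le_self prob_le_one

lemma integral_sub_le_tv (μ ν : Measure X) [IsProbabilityMeasure μ] [IsProbabilityMeasure ν]
    {f : X → ℝ} (hf : Measurable f) {B : ℝ} (hB : 0 ≤ B)
    (h0 : ∀ x, 0 ≤ f x) (h1 : ∀ x, f x ≤ B) :
    ∫ x, f x ∂μ - ∫ x, f x ∂ν ≤ B * tvDist μ ν := by
  set S : ℝ≥0∞ := ⨆ (F : Set X) (_ : MeasurableSet F), (μ F - ν F) with hS
  have hS1 : S ≤ 1 := tv_sup_le_one μ ν
  -- the lintegrals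
  set Aμ : ℝ≥0∞ := ∫⁻ x, ENNReal.ofReal (f x) ∂μ with hAμ
  set Aν : ℝ≥0∞ := ∫⁻ x, ENNReal.ofReal (f x) ∂ν with hAν
  have hbnd : ∀ (ρ : Measure X), IsProbabilityMeasure ρ →
      (∫⁻ x, ENNReal.ofReal (f x) ∂ρ) ≤ ENNReal.ofReal B := by
    intro ρ hρ
    calc ∫⁻ x, ENNReal.ofReal (f x) ∂ρ ≤ ∫⁻ _, ENNReal.ofReal B ∂ρ :=
          lintegral_mono fun x => ENNReal.ofReal_le_ofReal (h1 x)
    _ = ENNReal.ofReal B := by simp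
  have hAμB : Aμ ≤ ENNReal.ofReal B := hbnd μ inferInstance
  have hAνB : Aν ≤ ENNReal.ofReal B := hbnd ν inferInstance
  have hfin : Aμ ≠ ∞ := (lt_of_le_of_lt hAμB ofReal_lt_top).ne
  have hfinν : Aν ≠ ∞ := (lt_of_le_of_lt hAνB ofReal_lt_top).ne
  -- layer cake
  have hlc : ∀ (ρ : Measure X), (∫⁻ x, ENNReal.ofReal (f x) ∂ρ)
      = ∫⁻ t in Set.Ioi (0:ℝ), ρ {a | t < f a} := fun ρ =>
    lintegral_eq_lintegral_meas_lt ρ (Filter.Eventually.of_forall h0) hf.aemeasurable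
  -- the key ENNReal estimate
  have key : Aμ - Aν ≤ ENNReal.ofReal B * S := by
    rw [hAμ, hAν, hlc μ, hlc ν]
    have hmono : ∫⁻ t in Set.Ioi (0:ℝ), μ {a | t < f a}
        ≤ (∫⁻ t in Set.Ioi (0:ℝ), (μ {a | t < f a} - ν {a | t < f a}))
          + ∫⁻ t in Set.Ioi (0:ℝ), ν {a | t < f a} := by
      rw [← lintegral_add_right']
      · exact lintegral_mono fun t => le_tsub_add
      · have hanti : Antitone fun t : ℝ => ν {a | t < f a} := by
          intro s t hst
          exact measure_mono fun a ha => lt_of_le_of_lt hst ha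
        exact hanti.measurable.aemeasurable.restrict
    refine le_trans (tsub_le_iff_right.2 hmono) ?_
    have hptw : ∀ t ∈ Set.Ioi (0:ℝ),
        (μ {a | t < f a} - ν {a | t < f a}) ≤ Set.indicator (Set.Ioc 0 B) (fun _ => S) t := by
      intro t ht
      by_cases htB : t ≤ B
      · rw [Set.indicator_of_mem (Set.mem_Ioc.2 ⟨Set.mem_Ioi.1 ht, htB⟩)]
        exact le_iSup₂_of_le {a | t < f a}
          (measurableSet_lt measurable_const hf) le_rfl
      · have : {a | t < f a} = (∅ : Set X) := by
          ext a; simp only [Set.mem_setOf_eq, Set.mem_empty_iff_false, iff_false, not_lt]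
          exact le_trans (h1 a) (le_of_not_ge htB)
        simp [this]
    calc (∫⁻ t in Set.Ioi (0:ℝ), (μ {a | t < f a} - ν {a | t < f a}))
        ≤ ∫⁻ t in Set.Ioi (0:ℝ), Set.indicator (Set.Ioc 0 B) (fun _ => S) t :=
          setLIntegral_mono (measurable_const.indicator measurableSet_Ioc) hptw
      _ ≤ ∫⁻ t, Set.indicator (Set.Ioc 0 B) (fun _ => S) t := setLIntegral_le_lintegral _ _
      _ = S * volume (Set.Ioc (0:ℝ) B) := by
          rw [lintegral_indicator measurableSet_Ioc, setLIntegral_const]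
      _ = ENNReal.ofReal B * S := by rw [Real.volume_Ioc, mul_comm]; norm_num
  -- back to reals
  have hμint : ∫ x, f x ∂μ = Aμ.toReal := by
    rw [hAμ, integral_eq_lintegral_of_nonneg_ae (Filter.Eventually.of_forall h0)
      hf.aestronglyMeasurable]
  have hνint : ∫ x, f x ∂ν = Aν.toReal := by
    rw [hAν, integral_eq_lintegral_of_nonneg_ae (Filter.Eventually.of_forall h0)
      hf.aestronglyMeasurable]
  rw [hμint, hνint]
  rcases le_or_gt Aμ Aν with hle | hlt
  · refine le_trans (sub_nonpos.2 (ENNReal.toReal_mono hfinν hle)) ?_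
    exact mul_nonneg hB (tvDist_nonneg μ ν)
  · have : Aμ.toReal - Aν.toReal = (Aμ - Aν).toReal := by
      rw [ENNReal.toReal_sub_of_le hlt.le hfin]
    rw [this]
    have h2 : (Aμ - Aν).toReal ≤ (ENNReal.ofReal B * S).toReal := by
      refine ENNReal.toReal_mono ?_ key
      exact (ENNReal.mul_ne_top ofReal_ne_top (lt_of_le_of_lt hS1 one_lt_top).ne)
    refine le_trans h2 ?_
    rw [ENNReal.toReal_mul, ENNReal.toReal_ofReal hB]
    refine mul_le_mul_of_nonneg_left ?_ hB
    unfold tvDist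
    rw [← hS]
    refine ENNReal.toReal_mono ?_ le_self_add
    refine (lt_of_le_of_lt (add_le_add hS1 (tv_sup_le_one ν μ)) ?_).ne
    norm_num

end TVlemmas

section Helpers

variable {X : Type*} [MeasurableSpace X]

lemma integrable_of_bdd {μ : Measure X} [IsFiniteMeasure μ] {f : X → ℝ} {C : ℝ}
    (hf : Measurable f) (hb : ∀ x, |f x| ≤ C) : Integrable f μ :=
  (integrable_const C).mono' hf.aestronglyMeasurable
    (Filter.Eventually.of_forall fun x => by simpa using hb x)

lemma abs_integral_sub_le_tv (μ ν : Measure X) [IsProbabilityMeasure μ] [IsProbabilityMeasure ν]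
    {f : X → ℝ} (hf : Measurable f) {C : ℝ}
    (hb : ∀ x, |f x| ≤ C) :
    |∫ x, f x ∂μ - ∫ x, f x ∂ν| ≤ (2 * C) * tvDist μ ν := by
  have hX : Nonempty X := by
    by_contra h
    have h1 := measure_univ (μ := μ)
    rw [Set.univ_eq_empty_iff.2 (not_nonempty_iff.1 h)] at h1
    simp at h1
  have hC : 0 ≤ C := le_trans (abs_nonneg _) (hb (Classical.arbitrary X))
  have hint : ∀ (ρ : Measure X), IsProbabilityMeasure ρ →
      ∫ x, (f x + C) ∂ρ = (∫ x, f x ∂ρ) + C := by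
    intro ρ hρ
    rw [integral_add (integrable_of_bdd hf hb) (integrable_const C)]
    simp
  have hgm : Measurable fun x => f x + C := hf.add_const C
  have h0 : ∀ x, 0 ≤ f x + C := fun x => by
    have := (abs_le.1 (hb x)).1; linarith
  have h1 : ∀ x, f x + C ≤ 2 * C := fun x => by
    have := (abs_le.1 (hb x)).2; linarith
  have key1 : ∫ x, f x ∂μ - ∫ x, f x ∂ν ≤ 2 * C * tvDist μ ν := by
    have := integral_sub_le_tv μ ν hgm (by linarith) h0 h1
    rw [hint μ inferInstance, hint ν inferInstance] at this
    linarith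
  have key2 : ∫ x, f x ∂ν - ∫ x, f x ∂μ ≤ 2 * C * tvDist μ ν := by
    have := integral_sub_le_tv ν μ hgm (by linarith) h0 h1
    rw [hint μ inferInstance, hint ν inferInstance, tvDist_comm ν μ] at this
    linarith
  rw [abs_sub_le_iff]
  exact ⟨key1, key2⟩

end Helpers

section ProbFacts

variable {X : Type*} [MeasurableSpace X]

lemma isProb_bind {μ : Measure X} [IsProbabilityMeasure μ] {K : X → Measure X}
    (hK : Measurable K) (hKp : ∀ x, IsProbabilityMeasure (K x)) :
    IsProbabilityMeasure (μ.bind K) := by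
  constructor
  rw [Measure.bind_apply MeasurableSet.univ hK.aemeasurable]
  calc ∫⁻ x, K x Set.univ ∂μ = ∫⁻ _, 1 ∂μ := by
        refine lintegral_congr fun x => ?_
        exact (hKp x).measure_univ
  _ = 1 := by simp

lemma lintegral_ofReal_pos {μ : Measure X} [IsProbabilityMeasure μ] {h : X → ℝ}
    (hm : Measurable h) (hpos : ∀ x, 0 < h x) :
    0 < ∫⁻ x, ENNReal.ofReal (h x) ∂μ := by
  rw [lintegral_pos_iff_support (f := fun x => ENNReal.ofReal (h x)) (measurable_ofReal.comp hm)]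
  have : (Function.support fun x => ENNReal.ofReal (h x)) = Set.univ := by
    ext x
    simp only [Function.mem_support, Set.mem_univ, iff_true, ne_eq]
    simp [ENNReal.ofReal_eq_zero, not_le, hpos x]
  rw [this]
  simp

lemma lintegral_ofReal_lt_top {μ : Measure X} [IsProbabilityMeasure μ] {h : X → ℝ} {C : ℝ}
    (hb : ∀ x, h x ≤ C) :
    ∫⁻ x, ENNReal.ofReal (h x) ∂μ < ∞ := by
  calc ∫⁻ x, ENNReal.ofReal (h x) ∂μ ≤ ∫⁻ _, ENNReal.ofReal C ∂μ :=
        lintegral_mono fun x => ENNReal.ofReal_le_ofReal (hb x)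
  _ = ENNReal.ofReal C := by simp
  _ < ∞ := ofReal_lt_top

lemma isProb_normalized {ξ : Measure X} [IsProbabilityMeasure ξ] {h : X → ℝ} {C : ℝ}
    (hm : Measurable h) (hpos : ∀ x, 0 < h x) (hb : ∀ x, h x ≤ C) :
    IsProbabilityMeasure
      ((ξ.withDensity (fun x => ENNReal.ofReal (h x)) Set.univ)⁻¹ •
        ξ.withDensity fun x => ENNReal.ofReal (h x)) := by
  have hZ : ξ.withDensity (fun x => ENNReal.ofReal (h x)) Set.univ
      = ∫⁻ x, ENNReal.ofReal (h x) ∂ξ := by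
    rw [withDensity_apply _ MeasurableSet.univ, setLIntegral_univ]
  constructor
  rw [Measure.smul_apply, hZ, smul_eq_mul]
  rw [ENNReal.inv_mul_cancel]
  · exact (lintegral_ofReal_pos hm hpos).ne'
  · exact (lintegral_ofReal_lt_top hb).ne

/-- `filt` consists of probability measures. -/
lemma filt_isProb (π0 : Measure X) (hπ0 : IsProbabilityMeasure π0)
    (K : ℕ → X → Measure X) (g : ℕ → X → ℝ)
    (hK : ∀ t, Measurable (K t)) (hKp : ∀ t x, IsProbabilityMeasure (K t x))
    (hg : ∀ t, Measurable (g t)) (hgpos : ∀ t x, 0 < g t x)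
    (hgb : ∀ t, ∃ C, ∀ x, g t x ≤ C) :
    ∀ t, IsProbabilityMeasure (filt π0 K g t) := by
  intro t
  induction t with
  | zero => exact hπ0
  | succ t ih =>
    show IsProbabilityMeasure
      ((((filt π0 K g t).bind (K (t+1))).withDensity
          (fun x => ENNReal.ofReal (g (t+1) x)) Set.univ)⁻¹ •
        ((filt π0 K g t).bind (K (t+1))).withDensity fun x => ENNReal.ofReal (g (t+1) x))
    have : IsProbabilityMeasure ((filt π0 K g t).bind (K (t+1))) :=
      isProb_bind (hK (t+1)) (fun x => hKp (t+1) x)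
    obtain ⟨C, hC⟩ := hgb (t+1)
    exact isProb_normalized (hg (t+1)) (hgpos (t+1)) hC

lemma pred_isProb (π0 : Measure X) (hπ0 : IsProbabilityMeasure π0)
    (K : ℕ → X → Measure X) (g : ℕ → X → ℝ)
    (hK : ∀ t, Measurable (K t)) (hKp : ∀ t x, IsProbabilityMeasure (K t x))
    (hg : ∀ t, Measurable (g t)) (hgpos : ∀ t x, 0 < g t x)
    (hgb : ∀ t, ∃ C, ∀ x, g t x ≤ C) (t : ℕ) :
    IsProbabilityMeasure (pred π0 K g t) := by
  have := filt_isProb π0 hπ0 K g hK hKp hg hgpos hgb (t - 1)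
  exact isProb_bind (hK t) (fun x => hKp t x)

lemma integral_pos_of_pos {μ : Measure X} [IsProbabilityMeasure μ] {h : X → ℝ} {C : ℝ}
    (hm : Measurable h) (hpos : ∀ x, 0 < h x) (hb : ∀ x, h x ≤ C) :
    0 < ∫ x, h x ∂μ := by
  have hint : Integrable h μ := integrable_of_bdd hm (fun x => by
    rw [abs_of_pos (hpos x)]; exact hb x)
  rw [integral_pos_iff_support_of_nonneg_ae (Filter.Eventually.of_forall fun x => (hpos x).le) hint]
  have : Function.support h = Set.univ := by
    ext x; simp [Function.mem_support, (hpos x).ne']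
  rw [this]; simp

end ProbFacts

section MapLemmas

variable {X : Type*} [MeasurableSpace X]

lemma bind_map_left (μ : Measure X) {h : X → X} (hh : Measurable h) {K : X → Measure X}
    (hK : Measurable K) : (μ.map h).bind K = μ.bind (fun x => K (h x)) := by
  rw [Measure.bind, Measure.bind, Measure.map_map hK hh]
  rfl

lemma map_bind_right (μ : Measure X) {K : X → Measure X} (hK : Measurable K) {h : X → X}
    (hh : Measurable h) :
    μ.bind (fun x => (K x).map h) = (μ.bind K).map h := by
  have hK' : Measurable fun x => (K x).map h := (Measure.measurable_map h hh).comp hK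
  ext s hs
  rw [Measure.map_apply hh hs, Measure.bind_apply hs hK'.aemeasurable, Measure.bind_apply (hh hs) hK.aemeasurable]
  exact lintegral_congr fun x => Measure.map_apply hh hs

lemma withDensity_map_eq (μ : Measure X) {h : X → X} (hh : Measurable h) {ρ : X → ℝ≥0∞}
    (hρ : Measurable ρ) :
    (μ.map h).withDensity ρ = (μ.withDensity (fun x => ρ (h x))).map h := by
  ext s hs
  rw [withDensity_apply _ hs, Measure.map_apply hh hs, withDensity_apply _ (hh hs),
    setLIntegral_map hs hρ hh]

end MapLemmas

section IntegralBind

variable {X : Type*} [MeasurableSpace X]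

lemma measurable_integral_kernel {K : X → Measure X} (hK : Measurable K)
    (hKp : ∀ x, IsProbabilityMeasure (K x)) {f : X → ℝ} (hf : Measurable f) {C : ℝ}
    (hb : ∀ x, |f x| ≤ C) :
    Measurable fun x => ∫ y, f y ∂(K x) := by
  have heq : ∀ x, ∫ y, f y ∂(K x)
      = (∫⁻ y, ENNReal.ofReal (f y) ∂(K x)).toReal
        - (∫⁻ y, ENNReal.ofReal (-f y) ∂(K x)).toReal := by
    intro x
    exact integral_eq_lintegral_pos_part_sub_lintegral_neg_part (integrable_of_bdd hf hb)
  simp only [heq]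
  refine Measurable.sub ?_ ?_
  · exact ENNReal.measurable_toReal.comp
      ((Measure.measurable_lintegral (measurable_ofReal.comp hf)).comp hK)
  · exact ENNReal.measurable_toReal.comp
      ((Measure.measurable_lintegral (measurable_ofReal.comp hf.neg)).comp hK)

lemma integral_bind_of_bounded {μ : Measure X} [IsProbabilityMeasure μ] {K : X → Measure X}
    (hK : Measurable K) (hKp : ∀ x, IsProbabilityMeasure (K x)) {f : X → ℝ}
    (hf : Measurable f) {C : ℝ} (hb : ∀ x, |f x| ≤ C) :
    ∫ y, f y ∂(μ.bind K) = ∫ x, ∫ y, f y ∂(K x) ∂μ := by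
  have hprob : IsProbabilityMeasure (μ.bind K) := isProb_bind hK hKp
  have hX : Nonempty X := by
    by_contra h
    have h1 := measure_univ (μ := μ)
    rw [Set.univ_eq_empty_iff.2 (not_nonempty_iff.1 h)] at h1
    simp at h1
  have hC : 0 ≤ C := le_trans (abs_nonneg _) (hb (Classical.arbitrary X))
  -- decompose both sides via lintegrals
  have hdec : ∀ (ρ : Measure X), IsProbabilityMeasure ρ → ∫ y, f y ∂ρ
      = (∫⁻ y, ENNReal.ofReal (f y) ∂ρ).toReal - (∫⁻ y, ENNReal.ofReal (-f y) ∂ρ).toReal :=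
    fun ρ hρ => integral_eq_lintegral_pos_part_sub_lintegral_neg_part (integrable_of_bdd hf hb)
  have hlb : ∀ {q : X → ℝ}, Measurable q → (∀ x, |q x| ≤ C) →
      ∫⁻ y, ENNReal.ofReal (q y) ∂(μ.bind K) = ∫⁻ x, ∫⁻ y, ENNReal.ofReal (q y) ∂(K x) ∂μ :=
    fun hq _ => Measure.lintegral_bind hK.aemeasurable (measurable_ofReal.comp hq).aemeasurable
  rw [hdec _ hprob, hlb hf hb, hlb (q := fun y => -f y) hf.neg (fun x => by simpa using hb x)]
  -- now the RHS
  have hPm : Measurable fun x => ∫⁻ y, ENNReal.ofReal (f y) ∂(K x) :=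
    (Measure.measurable_lintegral (measurable_ofReal.comp hf)).comp hK
  have hQm : Measurable fun x => ∫⁻ y, ENNReal.ofReal (-f y) ∂(K x) :=
    (Measure.measurable_lintegral (measurable_ofReal.comp hf.neg)).comp hK
  have hPbd : ∀ x, (∫⁻ y, ENNReal.ofReal (f y) ∂(K x)) ≤ ENNReal.ofReal C := by
    intro x
    have := hKp x
    calc ∫⁻ y, ENNReal.ofReal (f y) ∂(K x) ≤ ∫⁻ _, ENNReal.ofReal C ∂(K x) :=
          lintegral_mono fun y => ENNReal.ofReal_le_ofReal (le_trans (le_abs_self _) (hb y))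
    _ = ENNReal.ofReal C := by simp
  have hQbd : ∀ x, (∫⁻ y, ENNReal.ofReal (-f y) ∂(K x)) ≤ ENNReal.ofReal C := by
    intro x
    have := hKp x
    calc ∫⁻ y, ENNReal.ofReal (-f y) ∂(K x) ≤ ∫⁻ _, ENNReal.ofReal C ∂(K x) :=
          lintegral_mono fun y => ENNReal.ofReal_le_ofReal
            (le_trans (neg_le_abs _) (hb y))
    _ = ENNReal.ofReal C := by simp
  have hPint : ∫ x, (∫⁻ y, ENNReal.ofReal (f y) ∂(K x)).toReal ∂μ
      = (∫⁻ x, ∫⁻ y, ENNReal.ofReal (f y) ∂(K x) ∂μ).toReal :=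
    integral_toReal hPm.aemeasurable (Filter.Eventually.of_forall fun x =>
      lt_of_le_of_lt (hPbd x) ofReal_lt_top)
  have hQint : ∫ x, (∫⁻ y, ENNReal.ofReal (-f y) ∂(K x)).toReal ∂μ
      = (∫⁻ x, ∫⁻ y, ENNReal.ofReal (-f y) ∂(K x) ∂μ).toReal :=
    integral_toReal hQm.aemeasurable (Filter.Eventually.of_forall fun x =>
      lt_of_le_of_lt (hQbd x) ofReal_lt_top)
  have hrhs : ∫ x, ∫ y, f y ∂(K x) ∂μ
      = ∫ x, (∫⁻ y, ENNReal.ofReal (f y) ∂(K x)).toReal ∂μ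
        - ∫ x, (∫⁻ y, ENNReal.ofReal (-f y) ∂(K x)).toReal ∂μ := by
    rw [← integral_sub]
    · exact integral_congr_ae (Filter.Eventually.of_forall fun x => hdec (K x) (hKp x))
    · refine integrable_of_bdd (ENNReal.measurable_toReal.comp hPm) (C := C) fun x => ?_
      rw [abs_of_nonneg ENNReal.toReal_nonneg]
      exact le_trans (ENNReal.toReal_mono ofReal_ne_top (hPbd x)) (by simp [ENNReal.toReal_ofReal hC])
    · refine integrable_of_bdd (ENNReal.measurable_toReal.comp hQm) (C := C) fun x => ?_
      rw [abs_of_nonneg ENNReal.toReal_nonneg]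
      exact le_trans (ENNReal.toReal_mono ofReal_ne_top (hQbd x)) (by simp [ENNReal.toReal_ofReal hC])
  rw [hrhs, hPint, hQint]

lemma abs_integral_le_of_bdd {μ : Measure X} [IsProbabilityMeasure μ] {f : X → ℝ} {C : ℝ}
    (hb : ∀ x, |f x| ≤ C) : |∫ x, f x ∂μ| ≤ C := by
  have := norm_integral_le_of_norm_le_const (μ := μ) (f := f) (C := C)
    (Filter.Eventually.of_forall fun x => by simpa using hb x)
  simpa using this

end IntegralBind

section Normalized

variable {X : Type*} [MeasurableSpace X]

lemma integral_normalized {ξ : Measure X} [IsProbabilityMeasure ξ] {h : X → ℝ}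
    (hm : Measurable h) {C : ℝ} (hb : ∀ x, h x ≤ C) (hpos : ∀ x, 0 < h x) (f : X → ℝ) :
    ∫ x, f x ∂((ξ.withDensity (fun x => ENNReal.ofReal (h x)) Set.univ)⁻¹ •
        ξ.withDensity fun x => ENNReal.ofReal (h x))
      = (∫ x, h x ∂ξ)⁻¹ * ∫ x, h x * f x ∂ξ := by
  set Z : ℝ≥0∞ := ξ.withDensity (fun x => ENNReal.ofReal (h x)) Set.univ with hZdef
  have hZ : Z = ∫⁻ x, ENNReal.ofReal (h x) ∂ξ := by
    rw [hZdef, withDensity_apply _ MeasurableSet.univ, setLIntegral_univ]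
  have hZ0 : Z ≠ 0 := by rw [hZ]; exact (lintegral_ofReal_pos hm hpos).ne'
  have hZtop : Z ≠ ∞ := by rw [hZ]; exact (lintegral_ofReal_lt_top hb).ne
  have hZreal : Z.toReal = ∫ x, h x ∂ξ := by
    rw [hZ, integral_eq_lintegral_of_nonneg_ae (Filter.Eventually.of_forall fun x => (hpos x).le)
      hm.aestronglyMeasurable]
  rw [integral_smul_measure]
  have hwd : ∫ x, f x ∂(ξ.withDensity fun x => ENNReal.ofReal (h x)) = ∫ x, h x * f x ∂ξ := by
    have hmnn : Measurable fun x => Real.toNNReal (h x) := hm.real_toNNReal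
    have : (fun x => ENNReal.ofReal (h x)) = fun x => (↑(Real.toNNReal (h x)) : ℝ≥0∞) := by
      rfl
    rw [this, integral_withDensity_eq_integral_smul hmnn f]
    refine integral_congr_ae (Filter.Eventually.of_forall fun x => ?_)
    simp only [NNReal.smul_def, smul_eq_mul]
    rw [Real.coe_toNNReal _ (hpos x).le]
  rw [hwd, ENNReal.toReal_inv, hZreal]
  simp

end Normalized

section Identity

variable {X : Type*} [MeasurableSpace X]

lemma filt_nudged_eq (π0 : Measure X) (K : ℕ → X → Measure X) (g : ℕ → X → ℝ)
    (a b : ℕ → X → X) (hK : ∀ t, Measurable (K t))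
    (ha : ∀ t, Measurable (a t)) (hbm : ∀ t, Measurable (b t))
    (hg : ∀ t, Measurable (g t))
    (hb0 : b 0 = id) (hbeq : ∀ t, 1 ≤ t → b t = a t) :
    ∀ t, filt π0 (nudged K a) g t
      = (filt π0 (fun t x => K t (b (t-1) x)) (fun t x => g t (a t x)) t).map (b t) := by
  intro t
  induction t with
  | zero =>
    show π0 = Measure.map (b 0) π0
    rw [hb0, Measure.map_id]
  | succ t ih =>
    have harith : t + 1 - 1 = t := rfl
    have hKb : ∀ s, Measurable fun x => K s (b (s-1) x) := fun s => (hK s).comp (hbm (s-1))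
    set πalt := filt π0 (fun t x => K t (b (t-1) x)) (fun t x => g t (a t x)) t with hπalt
    have hstep : (πalt.map (b t)).bind (nudged K a (t+1))
        = (πalt.bind (fun x => K (t+1) (b t x))).map (a (t+1)) := by
      rw [bind_map_left πalt (hbm t)
        (K := nudged K a (t+1)) ((Measure.measurable_map (a (t+1)) (ha (t+1))).comp (hK (t+1)))]
      exact map_bind_right πalt ((hK (t+1)).comp (hbm t)) (ha (t+1))
    show ((((filt π0 (nudged K a) g t).bind (nudged K a (t+1))).withDensity
            (fun x => ENNReal.ofReal (g (t+1) x)) Set.univ)⁻¹ •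
          ((filt π0 (nudged K a) g t).bind (nudged K a (t+1))).withDensity
            (fun x => ENNReal.ofReal (g (t+1) x)))
        = _
    rw [ih, hstep]
    set ξalt := πalt.bind (fun x => K (t+1) (b t x)) with hξalt
    have hwd : (ξalt.map (a (t+1))).withDensity (fun x => ENNReal.ofReal (g (t+1) x))
        = (ξalt.withDensity (fun x => ENNReal.ofReal (g (t+1) (a (t+1) x)))).map (a (t+1)) :=
      withDensity_map_eq ξalt (ha (t+1)) (measurable_ofReal.comp (hg (t+1)))
    rw [hwd]
    have hmass : ((ξalt.withDensity
          (fun x => ENNReal.ofReal (g (t+1) (a (t+1) x)))).map (a (t+1))) Set.univ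
        = (ξalt.withDensity (fun x => ENNReal.ofReal (g (t+1) (a (t+1) x)))) Set.univ := by
      rw [Measure.map_apply (ha (t+1)) MeasurableSet.univ, Set.preimage_univ]
    rw [hmass, ← Measure.map_smul, hbeq (t+1) (by omega)]
    rfl

lemma pred_nudged_eq (π0 : Measure X) (K : ℕ → X → Measure X) (g : ℕ → X → ℝ)
    (a b : ℕ → X → X) (hK : ∀ t, Measurable (K t))
    (ha : ∀ t, Measurable (a t)) (hbm : ∀ t, Measurable (b t))
    (hg : ∀ t, Measurable (g t))
    (hb0 : b 0 = id) (hbeq : ∀ t, 1 ≤ t → b t = a t) (t : ℕ) (ht : 1 ≤ t) :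
    pred π0 (nudged K a) g t
      = (pred π0 (fun t x => K t (b (t-1) x)) (fun t x => g t (a t x)) t).map (a t) := by
  unfold pred
  rw [filt_nudged_eq π0 K g a b hK ha hbm hg hb0 hbeq (t-1)]
  rw [bind_map_left _ (hbm (t-1))
      (K := nudged K a t) ((Measure.measurable_map (a t) (ha t)).comp (hK t))]
  exact map_bind_right _ ((hK t).comp (hbm (t-1))) (ha t)

lemma evidence_nudged_eq (π0 : Measure X) (K : ℕ → X → Measure X) (g : ℕ → X → ℝ)
    (a b : ℕ → X → X) (hK : ∀ t, Measurable (K t))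
    (ha : ∀ t, Measurable (a t)) (hbm : ∀ t, Measurable (b t))
    (hg : ∀ t, Measurable (g t))
    (hb0 : b 0 = id) (hbeq : ∀ t, 1 ≤ t → b t = a t) (T : ℕ) :
    evidence π0 (nudged K a) g T
      = ∏ t ∈ Finset.Icc 1 T,
          ∫ x, g t (a t x) ∂(pred π0 (fun t x => K t (b (t-1) x)) (fun t x => g t (a t x)) t) := by
  unfold evidence
  refine Finset.prod_congr rfl fun t htm => ?_
  have ht : 1 ≤ t := (Finset.mem_Icc.1 htm).1
  rw [pred_nudged_eq π0 K g a b hK ha hbm hg hb0 hbeq t ht]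
  rw [integral_map (ha t).aemeasurable (hg t).aestronglyMeasurable]

end Identity

section Conv

open Filter

variable {X : Type*} [MeasurableSpace X] [NormedAddCommGroup X]

/-- Convergence of a sequence of measures strong enough to push bounded measurable
pointwise-convergent integrands through. -/
def MConv (μs : ℕ → Measure X) (μ : Measure X) : Prop :=
  ∀ (C : ℝ) (f : ℕ → X → ℝ) (flim : X → ℝ), (∀ n, Measurable (f n)) → Measurable flim →
    (∀ n x, |f n x| ≤ C) → (∀ x, |flim x| ≤ C) →
    (∀ x, Tendsto (fun n => f n x) atTop (nhds (flim x))) →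
    Tendsto (fun n => ∫ x, f n x ∂(μs n)) atTop (nhds (∫ x, flim x ∂μ))

lemma MConv.const (μ : Measure X) [IsProbabilityMeasure μ] : MConv (fun _ => μ) μ := by
  intro C f flim hfm hflm hfb hflb hptw
  exact tendsto_integral_of_dominated_convergence (fun _ => C)
    (fun n => (hfm n).aestronglyMeasurable) (integrable_const C)
    (fun n => Filter.Eventually.of_forall fun x => by simpa using hfb n x)
    (Filter.Eventually.of_forall hptw)

lemma MConv.bindStep {μs : ℕ → Measure X} {μ : Measure X}
    (hμs : ∀ n, IsProbabilityMeasure (μs n)) (hμ : IsProbabilityMeasure μ)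
    (hconv : MConv μs μ)
    {K : X → Measure X} (hK : Measurable K) (hKp : ∀ x, IsProbabilityMeasure (K x))
    (hKtv : ∀ x, ∀ ε > (0:ℝ), ∃ δ > (0:ℝ), ∀ x', ‖x - x'‖ ≤ δ → tvDist (K x) (K x') ≤ ε)
    {c : ℕ → X → X} (hcm : ∀ n, Measurable (c n))
    (hcl : ∀ x, Tendsto (fun n => ‖x - c n x‖) atTop (nhds 0)) :
    MConv (fun n => (μs n).bind (fun x => K (c n x))) (μ.bind K) := by
  haveI := hμ
  intro C f flim hfm hflm hfb hflb hptw
  have hX : Nonempty X := by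
    by_contra h
    have h1 := measure_univ (μ := μ)
    rw [Set.univ_eq_empty_iff.2 (not_nonempty_iff.1 h)] at h1
    simp at h1
  have hC : 0 ≤ C := le_trans (abs_nonneg _) (hfb 0 (Classical.arbitrary X))
  -- rewrite via the kernels
  have hrw : ∀ n, ∫ x, f n x ∂((μs n).bind (fun x => K (c n x)))
      = ∫ x, (∫ y, f n y ∂(K (c n x))) ∂(μs n) := by
    intro n
    haveI := hμs n
    exact integral_bind_of_bounded ((hK.comp (hcm n))) (fun x => hKp (c n x)) (hfm n) (hfb n)
  have hrwl : ∫ x, flim x ∂(μ.bind K) = ∫ x, (∫ y, flim y ∂(K x)) ∂μ :=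
    integral_bind_of_bounded hK hKp hflm hflb
  simp only [hrw, hrwl]
  -- apply MConv to the functions Fₙ
  refine hconv C (fun n x => ∫ y, f n y ∂(K (c n x))) (fun x => ∫ y, flim y ∂(K x))
    (fun n => (measurable_integral_kernel hK hKp (hfm n) (hfb n)).comp (hcm n))
    (measurable_integral_kernel hK hKp hflm hflb)
    (fun n x => by haveI := hKp (c n x); exact abs_integral_le_of_bdd (hfb n))
    (fun x => by haveI := hKp x; exact abs_integral_le_of_bdd hflb)
    (fun x => ?_)
  -- pointwise convergence of Fₙ
  haveI := hKp x
  rw [tendsto_iff_dist_tendsto_zero]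
  have hbound : ∀ n, dist (∫ y, f n y ∂(K (c n x))) (∫ y, flim y ∂(K x))
      ≤ (2 * C) * tvDist (K (c n x)) (K x) + |∫ y, f n y ∂(K x) - ∫ y, flim y ∂(K x)| := by
    intro n
    haveI := hKp (c n x)
    rw [Real.dist_eq]
    calc |∫ y, f n y ∂(K (c n x)) - ∫ y, flim y ∂(K x)|
        ≤ |∫ y, f n y ∂(K (c n x)) - ∫ y, f n y ∂(K x)|
          + |∫ y, f n y ∂(K x) - ∫ y, flim y ∂(K x)| := abs_sub_le _ _ _
      _ ≤ (2 * C) * tvDist (K (c n x)) (K x)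
          + |∫ y, f n y ∂(K x) - ∫ y, flim y ∂(K x)| := by
          gcongr
          exact abs_integral_sub_le_tv (K (c n x)) (K x) (hfm n) (hfb n)
  -- both error terms tend to zero
  have htv : Tendsto (fun n => tvDist (K (c n x)) (K x)) atTop (nhds 0) := by
    rw [Metric.tendsto_atTop]
    intro ε hε
    obtain ⟨δ, hδ, hδprop⟩ := hKtv x (ε/2) (by linarith)
    obtain ⟨N, hN⟩ := (Metric.tendsto_atTop.1 (hcl x)) δ hδ
    refine ⟨N, fun n hn => ?_⟩
    have h1 : ‖x - c n x‖ ≤ δ := by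
      have := hN n hn
      rw [Real.dist_eq] at this
      have h2 : |‖x - c n x‖ - 0| = ‖x - c n x‖ := by
        rw [sub_zero, abs_of_nonneg (norm_nonneg _)]
      rw [h2] at this
      exact this.le
    have := hδprop (c n x) h1
    rw [tvDist_comm] at this
    rw [Real.dist_eq, sub_zero, abs_of_nonneg (tvDist_nonneg _ _)]
    linarith
  have hdct : Tendsto (fun n => |∫ y, f n y ∂(K x) - ∫ y, flim y ∂(K x)|) atTop (nhds 0) := by
    have h1 : Tendsto (fun n => ∫ y, f n y ∂(K x)) atTop (nhds (∫ y, flim y ∂(K x))) :=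
      tendsto_integral_of_dominated_convergence (fun _ => C)
        (fun n => (hfm n).aestronglyMeasurable) (integrable_const C)
        (fun n => Filter.Eventually.of_forall fun y => by simpa using hfb n y)
        (Filter.Eventually.of_forall hptw)
    have := h1.sub (tendsto_const_nhds (x := ∫ y, flim y ∂(K x)))
    rw [sub_self] at this
    exact this.abs.congr' (by simp) |>.mono_right (by rw [abs_zero])
  have hsum : Tendsto (fun n => (2 * C) * tvDist (K (c n x)) (K x)
      + |∫ y, f n y ∂(K x) - ∫ y, flim y ∂(K x)|) atTop (nhds 0) := by
    have := (htv.const_mul (2 * C)).add hdct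
    simpa using this
  exact squeeze_zero (fun n => dist_nonneg) hbound hsum

end Conv

section Conv2

open Filter

variable {X : Type*} [MeasurableSpace X] [NormedAddCommGroup X]

lemma MConv.densityStep {νs : ℕ → Measure X} {ν : Measure X}
    (hνs : ∀ n, IsProbabilityMeasure (νs n)) (hν : IsProbabilityMeasure ν)
    (hconv : MConv νs ν)
    {h : ℕ → X → ℝ} {hlim : X → ℝ} {C : ℝ}
    (hm : ∀ n, Measurable (h n)) (hlm : Measurable hlim)
    (hpos : ∀ n x, 0 < h n x) (hlpos : ∀ x, 0 < hlim x)
    (hb : ∀ n x, h n x ≤ C) (hlb : ∀ x, hlim x ≤ C)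
    (hptw : ∀ x, Tendsto (fun n => h n x) atTop (nhds (hlim x))) :
    MConv
      (fun n => (((νs n).withDensity (fun x => ENNReal.ofReal (h n x))) Set.univ)⁻¹ •
        (νs n).withDensity (fun x => ENNReal.ofReal (h n x)))
      ((ν.withDensity (fun x => ENNReal.ofReal (hlim x)) Set.univ)⁻¹ •
        ν.withDensity (fun x => ENNReal.ofReal (hlim x))) := by
  haveI := hν
  intro C' f flim hfm hflm hfb hflb hfptw
  have hX : Nonempty X := by
    by_contra hc
    have h1 := measure_univ (μ := ν)
    rw [Set.univ_eq_empty_iff.2 (not_nonempty_iff.1 hc)] at h1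
    simp at h1
  have hC : 0 ≤ C := le_trans (hpos 0 (Classical.arbitrary X)).le (hb 0 (Classical.arbitrary X))
  have hC' : 0 ≤ C' := le_trans (abs_nonneg _) (hfb 0 (Classical.arbitrary X))
  have hrw : ∀ n, ∫ x, f n x ∂((((νs n).withDensity (fun x => ENNReal.ofReal (h n x))) Set.univ)⁻¹ •
        (νs n).withDensity (fun x => ENNReal.ofReal (h n x)))
      = (∫ x, h n x ∂(νs n))⁻¹ * ∫ x, h n x * f n x ∂(νs n) := by
    intro n
    haveI := hνs n
    exact integral_normalized (hm n) (hb n) (hpos n) (f n)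
  have hrwl : ∫ x, flim x ∂((ν.withDensity (fun x => ENNReal.ofReal (hlim x)) Set.univ)⁻¹ •
        ν.withDensity (fun x => ENNReal.ofReal (hlim x)))
      = (∫ x, hlim x ∂ν)⁻¹ * ∫ x, hlim x * flim x ∂ν :=
    integral_normalized hlm hlb hlpos flim
  simp only [hrw, hrwl]
  have hnum : Tendsto (fun n => ∫ x, h n x * f n x ∂(νs n)) atTop
      (nhds (∫ x, hlim x * flim x ∂ν)) := by
    refine hconv (C * C') (fun n x => h n x * f n x) (fun x => hlim x * flim x)
      (fun n => (hm n).mul (hfm n)) (hlm.mul hflm) (fun n x => ?_) (fun x => ?_)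
      (fun x => (hptw x).mul (hfptw x))
    · rw [abs_mul]
      exact mul_le_mul (by rw [abs_of_pos (hpos n x)]; exact hb n x) (hfb n x)
        (abs_nonneg _) hC
    · rw [abs_mul]
      exact mul_le_mul (by rw [abs_of_pos (hlpos x)]; exact hlb x) (hflb x)
        (abs_nonneg _) hC
  have hden : Tendsto (fun n => ∫ x, h n x ∂(νs n)) atTop (nhds (∫ x, hlim x ∂ν)) := by
    refine hconv C h hlim hm hlm (fun n x => by rw [abs_of_pos (hpos n x)]; exact hb n x)
      (fun x => by rw [abs_of_pos (hlpos x)]; exact hlb x) hptw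
  have hZpos : 0 < ∫ x, hlim x ∂ν := integral_pos_of_pos hlm hlpos hlb
  exact (hden.inv₀ hZpos.ne').mul hnum

end Conv2

section Ascent

variable {E : Type*} [NormedAddCommGroup E] [InnerProductSpace ℝ E] [CompleteSpace E]

lemma fderiv_eq_inner_gradient {φ : E → ℝ} (y w : E) :
    fderiv ℝ φ y w = @inner ℝ E _ (gradient φ y) w := by
  rw [gradient]
  rw [← InnerProductSpace.toDual_apply_apply (𝕜 := ℝ)]
  rw [LinearIsometryEquiv.apply_symm_apply]

lemma gradient_ascent {φ : E → ℝ} (hφ : Differentiable ℝ φ) {Λ : ℝ} (hΛ : 0 < Λ)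
    (hLip : ∀ x y, ‖gradient φ x - gradient φ y‖ ≤ Λ * ‖x - y‖) (x : E) :
    φ x + (1/(2*Λ)) * ‖gradient φ x‖^2 ≤ φ (x + (1/Λ) • gradient φ x) := by
  set γ : ℝ := 1/Λ with hγ
  have hγpos : 0 < γ := by positivity
  set v : E := γ • gradient φ x with hv
  set k : ℝ → ℝ := fun s => φ (x + s • v) + (Λ*‖v‖^2/2) * s^2 - s * (@inner ℝ E _ (gradient φ x) v)
    with hk
  have hkd : ∀ s : ℝ, HasDerivAt k
      ((@inner ℝ E _ (gradient φ (x + s • v)) v) + (Λ*‖v‖^2/2) * (2*s)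
        - @inner ℝ E _ (gradient φ x) v) s := by
    intro s
    have hc : HasDerivAt (fun s : ℝ => x + s • v) v s := by
      have h1 : HasDerivAt (fun s : ℝ => s • v) ((1:ℝ) • v) s := (hasDerivAt_id s).smul_const v
      rw [one_smul] at h1
      exact h1.const_add x
    have hφ' : HasDerivAt (fun s : ℝ => φ (x + s • v)) (fderiv ℝ φ (x + s • v) v) s :=
      (hφ (x + s • v)).hasFDerivAt.comp_hasDerivAt s hc
    rw [fderiv_eq_inner_gradient] at hφ'
    have h2 : HasDerivAt (fun s : ℝ => (Λ*‖v‖^2/2) * s^2) ((Λ*‖v‖^2/2) * (2*s)) s := by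
      have := ((hasDerivAt_pow 2 s).const_mul (Λ*‖v‖^2/2))
      simpa [mul_comm, mul_assoc, pow_one] using this
    have h3 : HasDerivAt (fun s : ℝ => s * (@inner ℝ E _ (gradient φ x) v))
        (@inner ℝ E _ (gradient φ x) v) s := by
      simpa using (hasDerivAt_id s).mul_const (@inner ℝ E _ (gradient φ x) v)
    exact (hφ'.add h2).sub h3
  have hmono : MonotoneOn k (Set.Icc 0 1) := by
    refine monotoneOn_of_deriv_nonneg (convex_Icc 0 1) ?_ ?_ ?_
    · exact Continuous.continuousOn (by
        have : ∀ s, ContinuousAt k s := fun s => (hkd s).continuousAt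
        exact continuous_iff_continuousAt.2 this)
    · intro s hs
      exact (hkd s).differentiableAt.differentiableWithinAt
    · intro s hs
      rw [interior_Icc] at hs
      rw [(hkd s).deriv]
      have hs0 : 0 ≤ s := hs.1.le
      have hinner : @inner ℝ E _ (gradient φ (x + s • v)) v - @inner ℝ E _ (gradient φ x) v
          = @inner ℝ E _ (gradient φ (x + s • v) - gradient φ x) v := by
        rw [inner_sub_left]
      have hcs : ‖gradient φ (x + s • v) - gradient φ x‖ ≤ Λ * (s * ‖v‖) := by
        have := hLip (x + s • v) x
        simpa [norm_smul, abs_of_nonneg hs0] using this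
      have habs : |@inner ℝ E _ (gradient φ (x + s • v) - gradient φ x) v|
          ≤ (Λ * (s * ‖v‖)) * ‖v‖ :=
        le_trans (abs_real_inner_le_norm _ _) (mul_le_mul_of_nonneg_right hcs (norm_nonneg v))
      have hlow : -(Λ * s * ‖v‖^2) ≤ @inner ℝ E _ (gradient φ (x + s • v) - gradient φ x) v := by
        have := (abs_le.1 habs).1
        nlinarith [this]
      nlinarith [hlow, hinner]
  have hkey := hmono (Set.left_mem_Icc.2 zero_le_one) (Set.right_mem_Icc.2 zero_le_one) zero_le_one
  have hk0 : k 0 = φ x := by simp [hk]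
  have hk1 : k 1 = φ (x + v) + (Λ*‖v‖^2/2) - @inner ℝ E _ (gradient φ x) v := by simp [hk]
  rw [hk0, hk1] at hkey
  have hip : @inner ℝ E _ (gradient φ x) v = γ * ‖gradient φ x‖^2 := by
    rw [hv, real_inner_smul_right, real_inner_self_eq_norm_sq]
  have hnv : ‖v‖^2 = γ^2 * ‖gradient φ x‖^2 := by
    rw [hv, norm_smul, mul_pow, Real.norm_eq_abs, sq_abs]
  have hΛγ : Λ * γ = 1 := by
    rw [hγ]; field_simp
  have hhalf : (1/(2*Λ)) = γ/2 := by rw [hγ]; ring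
  rw [hip, hnv] at hkey
  rw [hhalf]
  nlinarith [hkey, sq_nonneg ‖gradient φ x‖]

end Ascent



/-- **Corollary (gradient-ascent nudging increases the evidence).**
Let `α_t(x,γ) := x + γ∇log g_t(x)` be the gradient-ascent nudging maps.  If the
partial derivatives of `log g_t` are finite (here: `log g_t` is differentiable with
`L_t`-Lipschitz gradient), there are sets `A_t` with `ξ_t(A_t) > 0` on which
`∇log g_t ≠ 0`, the kernels are continuous in total variation and each `g_t` is
continuous and bounded, then there exist positive step sizes `γ_1, …, γ_T` with
`p_T(y_{1:T} | M^α) ≥ p_T(y_{1:T} | M)`. -/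
theorem gradient_nudging_increases_evidence
    {d : ℕ}
    (π0 : Measure (EuclideanSpace ℝ (Fin d))) (hπ0 : IsProbabilityMeasure π0)
    (K : ℕ → EuclideanSpace ℝ (Fin d) → Measure (EuclideanSpace ℝ (Fin d)))
    (hKmeas : ∀ t, Measurable (K t))
    (hKprob : ∀ t x, IsProbabilityMeasure (K t x))
    (g : ℕ → EuclideanSpace ℝ (Fin d) → ℝ)
    (hgpos : ∀ t x, 0 < g t x)
    -- (d) each `g_t` is continuous and bounded
    (hgcont : ∀ t, Continuous (g t))
    (hgbdd : ∀ t, ∃ C : ℝ, ∀ x, g t x ≤ C)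
    -- (a)/(b): `log g_t` is differentiable (finite gradient) with Lipschitz gradient
    (hdiff : ∀ t, Differentiable ℝ fun x => Real.log (g t x))
    (L : ℕ → ℝ)
    (hLip : ∀ t (x x' : EuclideanSpace ℝ (Fin d)),
        ‖gradient (fun y => Real.log (g t y)) x -
            gradient (fun y => Real.log (g t y)) x'‖ ≤ L t * ‖x - x'‖)
    (T : ℕ) (hT : 1 ≤ T)
    -- (c) sets of positive predictive mass on which the gradient does not vanish
    (A : ℕ → Set (EuclideanSpace ℝ (Fin d)))
    (hAmeas : ∀ t, MeasurableSet (A t))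
    (hApos : ∀ t, 1 ≤ t → t ≤ T → 0 < pred π0 K g t (A t))
    (hAgrad : ∀ t, 1 ≤ t → t ≤ T →
        ∀ x ∈ A t, gradient (fun y => Real.log (g t y)) x ≠ 0)
    -- (d) Assumption A2(ii): the kernels are continuous in total variation
    (hKtv : ∀ t (x : EuclideanSpace ℝ (Fin d)), ∀ ε > (0 : ℝ), ∃ δ > (0 : ℝ),
        ∀ x', ‖x - x'‖ ≤ δ → tvDist (K t x) (K t x') ≤ ε) :
    ∃ γ : ℕ → ℝ, (∀ t, 0 < γ t) ∧
      evidence π0 K g T ≤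
        evidence π0
          (nudged K fun t x => x + γ t • gradient (fun y => Real.log (g t y)) x) g T := by
  classical
  set G := fun (t : ℕ) (x : EuclideanSpace ℝ (Fin d)) => gradient (fun y => Real.log (g t y)) x with hG
  -- basic facts about the gradients
  have hGlip : ∀ t (x x' : EuclideanSpace ℝ (Fin d)), ‖G t x - G t x'‖ ≤ (max (L t) 1) * ‖x - x'‖ := by
    intro t x x'
    exact le_trans (hLip t x x') (mul_le_mul_of_nonneg_right (le_max_left _ _) (norm_nonneg _))
  have hGcont : ∀ t, Continuous (G t) := by
    intro t
    refine LipschitzWith.continuous (K := Real.toNNReal (max (L t) 1)) ?_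
    refine LipschitzWith.of_dist_le_mul fun x y => ?_
    rw [dist_eq_norm, dist_eq_norm, Real.coe_toNNReal _ (le_trans zero_le_one (le_max_right _ _))]
    exact hGlip t x y
  have hgmeas : ∀ t, Measurable (g t) := fun t => (hgcont t).measurable
  -- bounds for g
  set C : ℕ → ℝ := fun t => Classical.choose (hgbdd t) with hCdef
  have hC : ∀ t x, g t x ≤ C t := fun t => Classical.choose_spec (hgbdd t)
  have hgabs : ∀ t x, |g t x| ≤ C t := fun t x => by
    rw [abs_of_pos (hgpos t x)]; exact hC t x
  -- step sizes
  set Λ : ℝ := max (L T) 1 with hΛdef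
  have hΛ : 0 < Λ := lt_of_lt_of_le zero_lt_one (le_max_right _ _)
  set γstar : ℝ := 1/Λ with hγstar
  have hγstarpos : 0 < γstar := by positivity
  set γseq : ℕ → ℕ → ℝ := fun n t => if t = T then γstar else ((n:ℝ)+1)⁻¹ with hγseq
  have hγpos : ∀ n t, 0 < γseq n t := by
    intro n t
    by_cases h : t = T <;> simp [hγseq, h, hγstarpos] <;> positivity
  -- the nudging maps
  set a := fun (n t : ℕ) (x : EuclideanSpace ℝ (Fin d)) => x + γseq n t • G t x with ha
  set b := fun (n t : ℕ) (x : EuclideanSpace ℝ (Fin d)) => if t = 0 then x else a n t x with hb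
  have hacont : ∀ n t, Continuous (a n t) :=
    fun n t => continuous_id.add (by have := (hGcont t).const_smul (γseq n t); exact this)
  have hameas : ∀ n t, Measurable (a n t) := fun n t => (hacont n t).measurable
  have hbmeas : ∀ n t, Measurable (b n t) := by
    intro n t
    by_cases h : t = 0 <;> simp only [hb, h, if_true, if_false, reduceIte]
    · exact measurable_id
    · exact hameas n t
  have hb0 : ∀ n, b n 0 = id := fun n => by funext x; simp [hb]
  have hbeq : ∀ n t, 1 ≤ t → b n t = a n t := by
    intro n t ht
    funext x
    have htne : t ≠ 0 := by omega
    simp [hb, htne]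
  -- the alternative models
  set Kb := fun (n t : ℕ) (x : EuclideanSpace ℝ (Fin d)) => K t (b n (t-1) x) with hKb
  set ga := fun (n t : ℕ) (x : EuclideanSpace ℝ (Fin d)) => g t (a n t x) with hga
  have hKbmeas : ∀ n t, Measurable (Kb n t) := fun n t => (hKmeas t).comp (hbmeas n (t-1))
  have hgameas : ∀ n t, Measurable (ga n t) := fun n t => (hgmeas t).comp (hameas n t)
  have hgapos : ∀ n t x, 0 < ga n t x := fun n t x => hgpos t _
  have hgaC : ∀ n t x, ga n t x ≤ C t := fun n t x => hC t _
  -- probability instances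
  have hfiltOrig : ∀ t, IsProbabilityMeasure (filt π0 K g t) :=
    filt_isProb π0 hπ0 K g hKmeas hKprob hgmeas hgpos hgbdd
  have hpredOrig : ∀ t, IsProbabilityMeasure (pred π0 K g t) :=
    pred_isProb π0 hπ0 K g hKmeas hKprob hgmeas hgpos hgbdd
  have hfiltAlt : ∀ n t, IsProbabilityMeasure (filt π0 (Kb n) (ga n) t) := by
    intro n
    exact filt_isProb π0 hπ0 (Kb n) (ga n) (hKbmeas n) (fun t x => hKprob t _)
      (hgameas n) (hgapos n) (fun t => ⟨C t, hgaC n t⟩)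
  have hpredAlt : ∀ n t, IsProbabilityMeasure (pred π0 (Kb n) (ga n) t) := by
    intro n t
    exact pred_isProb π0 hπ0 (Kb n) (ga n) (hKbmeas n) (fun t x => hKprob t _)
      (hgameas n) (hgapos n) (fun t => ⟨C t, hgaC n t⟩) t
  -- pointwise convergence of the shifts at indices < T
  have hshift : ∀ s x, s ≤ T - 1 → Filter.Tendsto (fun n => ‖x - b n s x‖) Filter.atTop (nhds 0) := by
    intro s x hs
    by_cases h0 : s = 0
    · simp only [hb, h0, if_true, reduceIte, sub_self, norm_zero]
      exact tendsto_const_nhds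
    · have hsT : s ≠ T := by omega
      have hval : ∀ n, ‖x - b n s x‖ = ((n:ℝ)+1)⁻¹ * ‖G s x‖ := by
        intro n
        simp only [hb, h0, if_false, reduceIte, ha, hγseq, hsT]
        rw [sub_add_cancel_left, norm_neg, norm_smul, Real.norm_eq_abs,
          abs_of_pos (by positivity)]
      simp only [hval]
      have h1 : Filter.Tendsto (fun n : ℕ => ((n:ℝ)+1)⁻¹) Filter.atTop (nhds 0) := by
        simpa [one_div] using tendsto_one_div_add_atTop_nhds_zero_nat (𝕜 := ℝ)
      simpa using h1.mul_const ‖G s x‖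
  -- the inductive convergence claim
  have claim : ∀ t, t ≤ T - 1 →
      MConv (fun n => filt π0 (Kb n) (ga n) t) (filt π0 K g t) := by
    intro t
    induction t with
    | zero => intro _; exact MConv.const π0
    | succ t ih =>
      intro ht1
      have ht : t ≤ T - 1 := by omega
      have htT : t + 1 ≠ T := by omega
      have hbind : MConv (fun n => (filt π0 (Kb n) (ga n) t).bind (Kb n (t+1)))
          ((filt π0 K g t).bind (K (t+1))) := by
        refine MConv.bindStep (fun n => hfiltAlt n t) (hfiltOrig t) (ih ht)
          (hKmeas (t+1)) (fun x => hKprob (t+1) x) (hKtv (t+1))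
          (fun n => hbmeas n t) (fun x => hshift t x ht)
      have hdens := MConv.densityStep
        (fun n => isProb_bind (hKbmeas n (t+1)) (fun x => hKprob (t+1) _))
        (isProb_bind (hKmeas (t+1)) (fun x => hKprob (t+1) x)) hbind
        (h := fun n x => ga n (t+1) x) (hlim := g (t+1)) (C := C (t+1))
        (fun n => hgameas n (t+1)) (hgmeas (t+1)) (fun n x => hgapos n (t+1) x)
        (hgpos (t+1)) (fun n x => hgaC n (t+1) x) (hC (t+1)) ?_
      · exact hdens
      · intro x
        have hpt : Filter.Tendsto (fun n => a n (t+1) x) Filter.atTop (nhds x) := by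
          have h1 : Filter.Tendsto (fun n : ℕ => ((n:ℝ)+1)⁻¹) Filter.atTop (nhds 0) := by
            simpa [one_div] using tendsto_one_div_add_atTop_nhds_zero_nat (𝕜 := ℝ)
          have h2 : Filter.Tendsto (fun n : ℕ => γseq n (t+1) • G (t+1) x) Filter.atTop (nhds 0) := by
            have : (fun n : ℕ => γseq n (t+1) • G (t+1) x)
                = fun n : ℕ => (((n:ℝ)+1)⁻¹) • G (t+1) x := by
              funext n; simp [hγseq, htT]
            rw [this]
            simpa using h1.smul_const (G (t+1) x)
          have := tendsto_const_nhds (x := x) (f := Filter.atTop (α := ℕ)) |>.add h2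
          simpa using this
        exact ((hgcont (t+1)).continuousAt.tendsto).comp hpt
  -- convergence of the predictive measures at each 1 ≤ t ≤ T
  have hpredconv : ∀ t, 1 ≤ t → t ≤ T →
      MConv (fun n => pred π0 (Kb n) (ga n) t) (pred π0 K g t) := by
    intro t ht1 htT
    have h1 : t - 1 ≤ T - 1 := by omega
    exact MConv.bindStep (fun n => hfiltAlt n (t-1)) (hfiltOrig (t-1)) (claim (t-1) h1)
      (hKmeas t) (fun x => hKprob t x) (hKtv t)
      (fun n => hbmeas n (t-1)) (fun x => hshift (t-1) x h1)
  -- the limit integrands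
  set glim := fun (t : ℕ) => if t = T then (fun x => g T (a 0 T x)) else g t with hglim
  have hglimmeas : ∀ t, Measurable (glim t) := by
    intro t
    by_cases h : t = T <;> simp only [hglim, h, if_true, if_false, reduceIte]
    · exact (hgmeas T).comp (hameas 0 T)
    · exact hgmeas t
  -- convergence of each factor
  have hfactor : ∀ t, 1 ≤ t → t ≤ T →
      Filter.Tendsto (fun n => ∫ x, ga n t x ∂(pred π0 (Kb n) (ga n) t)) Filter.atTop
        (nhds (∫ x, glim t x ∂(pred π0 K g t))) := by
    intro t ht1 htT
    refine hpredconv t ht1 htT (C t) (fun n x => ga n t x) (glim t)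
      (fun n => hgameas n t) (hglimmeas t) (fun n x => by
        rw [abs_of_pos (hgapos n t x)]; exact hgaC n t x) ?_ ?_
    · intro x
      by_cases h : t = T
      · rw [h]
        simp only [hglim, if_true, reduceIte]
        rw [abs_of_pos (hgpos T _)]; exact hC T _
      · simp only [hglim, h, if_false, reduceIte]
        rw [abs_of_pos (hgpos t _)]; exact hC t _
    · intro x
      by_cases h : t = T
      · have hval : ∀ n, ga n t x = glim t x := by
          intro n; simp [hga, hglim, ha, hγseq, h]
        simp only [hval]
        exact tendsto_const_nhds
      · simp only [hglim, h, if_false, reduceIte]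
        have hpt : Filter.Tendsto (fun n => a n t x) Filter.atTop (nhds x) := by
          have h1 : Filter.Tendsto (fun n : ℕ => ((n:ℝ)+1)⁻¹) Filter.atTop (nhds 0) := by
            simpa [one_div] using tendsto_one_div_add_atTop_nhds_zero_nat (𝕜 := ℝ)
          have h2 : Filter.Tendsto (fun n : ℕ => γseq n t • G t x) Filter.atTop (nhds 0) := by
            have : (fun n : ℕ => γseq n t • G t x)
                = fun n : ℕ => (((n:ℝ)+1)⁻¹) • G t x := by
              funext n; simp [hγseq, h]
            rw [this]
            simpa using h1.smul_const (G t x)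
          have := tendsto_const_nhds (x := x) (f := Filter.atTop (α := ℕ)) |>.add h2
          simpa using this
        exact ((hgcont t).continuousAt.tendsto).comp hpt
  -- convergence of the product
  have hprodconv : Filter.Tendsto (fun n => ∏ t ∈ Finset.Icc 1 T,
      ∫ x, ga n t x ∂(pred π0 (Kb n) (ga n) t)) Filter.atTop
      (nhds (∏ t ∈ Finset.Icc 1 T, ∫ x, glim t x ∂(pred π0 K g t))) := by
    refine tendsto_finset_prod _ fun t htm => ?_
    exact hfactor t (Finset.mem_Icc.1 htm).1 (Finset.mem_Icc.1 htm).2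
  -- the strict gain at time T
  have hgain : ∫ x, g T x ∂(pred π0 K g T) < ∫ x, glim T x ∂(pred π0 K g T) := by
    haveI := hpredOrig T
    have hasc : ∀ x, Real.log (g T x) + (1/(2*Λ)) * ‖G T x‖^2
        ≤ Real.log (g T (a 0 T x)) := by
      intro x
      have := gradient_ascent (hdiff T) hΛ (fun x y => hGlip T x y) x
      have harg : x + (1/Λ) • gradient (fun y => Real.log (g T y)) x = a 0 T x := by
        simp [ha, hγseq, hγstar]
        rfl
      rw [harg] at this
      exact this
    have hge : ∀ x, g T x ≤ g T (a 0 T x) := by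
      intro x
      have h1 := hasc x
      have h2 : Real.log (g T x) ≤ Real.log (g T (a 0 T x)) := by
        nlinarith [sq_nonneg ‖G T x‖, one_div_pos.2 (by linarith : (0:ℝ) < 2*Λ)]
      calc g T x = Real.exp (Real.log (g T x)) := (Real.exp_log (hgpos T x)).symm
      _ ≤ Real.exp (Real.log (g T (a 0 T x))) := Real.exp_le_exp.2 h2
      _ = g T (a 0 T x) := Real.exp_log (hgpos T _)
    have hgt : ∀ x ∈ A T, g T x < g T (a 0 T x) := by
      intro x hx
      have hgrad : G T x ≠ 0 := hAgrad T hT le_rfl x hx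
      have hnorm : 0 < ‖G T x‖^2 := pow_pos (norm_pos_iff.mpr hgrad) 2
      have h2 : Real.log (g T x) < Real.log (g T (a 0 T x)) := by
        have h3 := hasc x
        have h4 : 0 < (1/(2*Λ)) * ‖G T x‖^2 := by positivity
        linarith
      calc g T x = Real.exp (Real.log (g T x)) := (Real.exp_log (hgpos T x)).symm
      _ < Real.exp (Real.log (g T (a 0 T x))) := Real.exp_lt_exp.2 h2
      _ = g T (a 0 T x) := Real.exp_log (hgpos T _)
    -- compute as integral of the nonnegative difference
    set D := fun (x : EuclideanSpace ℝ (Fin d)) => g T (a 0 T x) - g T x with hD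
    have hDmeas : Measurable D := ((hgmeas T).comp (hameas 0 T)).sub (hgmeas T)
    have hDbd : ∀ x, |D x| ≤ C T := by
      intro x
      rw [abs_of_nonneg (by simp [hD, sub_nonneg, hge x])]
      have := hgpos T x
      have := hC T (a 0 T x)
      simp only [hD]
      linarith
    have hDint : Integrable D (pred π0 K g T) := integrable_of_bdd hDmeas hDbd
    have hDpos : 0 < ∫ x, D x ∂(pred π0 K g T) := by
      rw [integral_pos_iff_support_of_nonneg_ae
        (Filter.Eventually.of_forall fun x => by simp [hD, sub_nonneg, hge x]) hDint]
      refine lt_of_lt_of_le (hApos T hT le_rfl) (measure_mono ?_)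
      intro x hx
      have := hgt x hx
      simp only [Function.mem_support, hD, ne_eq]
      intro hcon
      linarith
    have hsplit : ∫ x, glim T x ∂(pred π0 K g T)
        = ∫ x, g T x ∂(pred π0 K g T) + ∫ x, D x ∂(pred π0 K g T) := by
      rw [← integral_add (integrable_of_bdd (hgmeas T) (hgabs T)) hDint]
      refine integral_congr_ae (Filter.Eventually.of_forall fun x => ?_)
      simp [hglim, hD]
    linarith [hsplit, hDpos]
  -- compare the limit of the products with the original evidence
  have hpos_factor : ∀ t, 1 ≤ t → t ≤ T → 0 < ∫ x, g t x ∂(pred π0 K g t) := by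
    intro t ht1 htT
    haveI := hpredOrig t
    exact integral_pos_of_pos (hgmeas t) (hgpos t) (hC t)
  have hlimgt : evidence π0 K g T < ∏ t ∈ Finset.Icc 1 T, ∫ x, glim t x ∂(pred π0 K g t) := by
    unfold evidence
    obtain ⟨T', hT'⟩ : ∃ T', T = T' + 1 := ⟨T - 1, by omega⟩
    subst hT'
    rw [Finset.prod_Icc_succ_top (by omega), Finset.prod_Icc_succ_top (by omega)]
    have heqbelow : ∏ t ∈ Finset.Icc 1 T', ∫ x, glim t x ∂(pred π0 K g t)
        = ∏ t ∈ Finset.Icc 1 T', ∫ x, g t x ∂(pred π0 K g t) := by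
      refine Finset.prod_congr rfl fun t htm => ?_
      have htT : t ≠ T' + 1 := by
        have := (Finset.mem_Icc.1 htm).2; omega
      simp only [hglim, htT, if_false, reduceIte]
    rw [heqbelow]
    have hPpos : 0 < ∏ t ∈ Finset.Icc 1 T', ∫ x, g t x ∂(pred π0 K g t) := by
      refine Finset.prod_pos fun t htm => ?_
      exact hpos_factor t (Finset.mem_Icc.1 htm).1 (by have := (Finset.mem_Icc.1 htm).2; omega)
    exact mul_lt_mul_of_pos_left hgain hPpos
  -- pick a large enough n
  have heven : ∀ᶠ n in Filter.atTop, evidence π0 K g T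
      < ∏ t ∈ Finset.Icc 1 T, ∫ x, ga n t x ∂(pred π0 (Kb n) (ga n) t) :=
    hprodconv.eventually (eventually_gt_nhds hlimgt)
  obtain ⟨n, hn⟩ := heven.exists
  refine ⟨γseq n, hγpos n, ?_⟩
  have hidentity : evidence π0 (nudged K (a n)) g T
      = ∏ t ∈ Finset.Icc 1 T, ∫ x, ga n t x ∂(pred π0 (Kb n) (ga n) t) := by
    exact evidence_nudged_eq π0 K g (a n) (b n) hKmeas (hameas n) (hbmeas n) hgmeas
      (hb0 n) (hbeq n) T
  have hminor : (nudged K fun t x => x + γseq n t • gradient (fun y => Real.log (g t y)) x)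
      = nudged K (a n) := rfl
  rw [hminor, hidentity]
  exact hn.le

end Nudging
end

section
/- Let M = (π₀, K, g) be a state-space model, α_t : 𝒳 → 𝒳 measurable maps with α₀ the identity, M^α the nudged model and M̄^α the alternative nudged model. Then for every t ≥ 1 the normalisation constants coincide, ξ̄_t^α(g_t^α) = ξ_t^α(g_t), and consequently the two models have the same Bayesian evidence: p_T(y_{1:T} | M̄^α) = ∏_{t=1}^T ξ̄_t^α(g_t^α) = ∏_{t=1}^T ξ_t^α(g_t) = p_T(y_{1:T} | M^α) for every T ≥ 1. -/
open MeasureTheory ENNReal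

namespace Nudging

variable {X : Type*} [MeasurableSpace X]

private lemma map_bind_aux {X : Type*} [MeasurableSpace X] (μ : Measure X)
    {κ : X → Measure X} (hκ : Measurable κ) {f : X → X} (hf : Measurable f) :
    (μ.map f).bind κ = μ.bind (fun x => κ (f x)) := by
  have h1 : Measurable fun x => κ (f x) := hκ.comp hf
  ext s hs
  rw [Measure.bind_apply hs hκ.aemeasurable, Measure.bind_apply hs h1.aemeasurable]
  exact lintegral_map ((Measure.measurable_coe hs).comp hκ) hf

private lemma bind_map_aux {X : Type*} [MeasurableSpace X] (μ : Measure X)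
    {κ : X → Measure X} (hκ : Measurable κ) {f : X → X} (hf : Measurable f) :
    μ.bind (fun x => (κ x).map f) = (μ.bind κ).map f := by
  have h1 : Measurable fun x => (κ x).map f := (Measure.measurable_map f hf).comp hκ
  ext s hs
  rw [Measure.map_apply hf hs, Measure.bind_apply (hf hs) hκ.aemeasurable,
    Measure.bind_apply hs h1.aemeasurable]
  refine lintegral_congr fun x => ?_
  rw [Measure.map_apply hf hs]

private lemma withDensity_map_aux {X : Type*} [MeasurableSpace X] (μ : Measure X)
    {f : X → X} (hf : Measurable f) {h : X → ℝ≥0∞} (hh : Measurable h) :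
    (μ.map f).withDensity h = (μ.withDensity (fun x => h (f x))).map f := by
  ext s hs
  rw [withDensity_apply _ hs, Measure.map_apply hf hs,
    withDensity_apply _ (hf hs), setLIntegral_map hs hh hf]

private lemma filt_map_aux {X : Type*} [MeasurableSpace X]
    (π0 : Measure X) (K : ℕ → X → Measure X) (hKmeas : ∀ t, Measurable (K t))
    (g : ℕ → X → ℝ) (hgmeas : ∀ t, Measurable (g t))
    (a : ℕ → X → X) (hameas : ∀ t, Measurable (a t)) (ha0 : a 0 = fun x => x) :
    ∀ t, filt π0 (nudged K a) g t =
      (filt π0 (altKernel K a) (altG g a) t).map (a t) := by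
  intro t
  induction t with
  | zero =>
      show π0 = π0.map (a 0)
      rw [ha0]
      exact Measure.map_id.symm
  | succ t ih =>
      have hbind : (filt π0 (nudged K a) g t).bind (nudged K a (t + 1)) =
          ((filt π0 (altKernel K a) (altG g a) t).bind (altKernel K a (t + 1))).map
            (a (t + 1)) := by
        have hN : Measurable (nudged K a (t + 1)) :=
          (Measure.measurable_map _ (hameas (t + 1))).comp (hKmeas (t + 1))
        rw [ih, map_bind_aux _ hN (hameas t)]
        exact bind_map_aux _ ((hKmeas (t + 1)).comp (hameas t)) (hameas (t + 1))
      show (_ : Measure X) = _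
      simp only [filt]
      have hh : Measurable fun x => ENNReal.ofReal (g (t + 1) x) :=
        ENNReal.measurable_ofReal.comp (hgmeas (t + 1))
      rw [hbind, withDensity_map_aux _ (hameas (t + 1)) hh]
      rw [Measure.map_smul, Measure.map_apply (hameas (t + 1)) MeasurableSet.univ,
        Set.preimage_univ]
      rfl

/-- **Remark (the nudged and alternative nudged models have the same evidence).**
With `α₀` the identity, the normalisation constants of the nudged model `M^α` and of
the alternative nudged model `M̄^α` coincide, `ξ̄_t^α(g_t^α) = ξ_t^α(g_t)` for every
`t ≥ 1`, and consequently `p_T(y_{1:T}|M̄^α) = p_T(y_{1:T}|M^α)` for every `T ≥ 1`. -/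
theorem nudged_alt_same_evidence
    {X : Type*} [MeasurableSpace X]
    (π0 : Measure X) (hπ0 : IsProbabilityMeasure π0)
    (K : ℕ → X → Measure X)
    (hKmeas : ∀ t, Measurable (K t))
    (hKprob : ∀ t x, IsProbabilityMeasure (K t x))
    (g : ℕ → X → ℝ)
    (hg0 : ∀ t x, 0 ≤ g t x)
    (hgmeas : ∀ t, Measurable (g t))
    (hgbdd : ∀ t, ∃ C : ℝ, ∀ x, g t x ≤ C)
    (a : ℕ → X → X) (hameas : ∀ t, Measurable (a t)) (ha0 : a 0 = fun x => x) :
    (∀ t, 1 ≤ t →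
      ∫ x, altG g a t x ∂(pred π0 (altKernel K a) (altG g a) t) =
        ∫ x, g t x ∂(pred π0 (nudged K a) g t)) ∧
    (∀ T, 1 ≤ T →
      evidence π0 (altKernel K a) (altG g a) T = evidence π0 (nudged K a) g T) := by
  have hpred : ∀ t, 1 ≤ t → pred π0 (nudged K a) g t =
      (pred π0 (altKernel K a) (altG g a) t).map (a t) := by
    intro t ht
    obtain ⟨s, rfl⟩ : ∃ s, t = s + 1 := ⟨t - 1, (Nat.succ_pred_eq_of_pos ht).symm⟩
    show (filt π0 (nudged K a) g s).bind (nudged K a (s + 1)) =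
      ((filt π0 (altKernel K a) (altG g a) s).bind (altKernel K a (s + 1))).map (a (s + 1))
    have hN : Measurable (nudged K a (s + 1)) :=
      (Measure.measurable_map _ (hameas (s + 1))).comp (hKmeas (s + 1))
    rw [filt_map_aux π0 K hKmeas g hgmeas a hameas ha0 s,
      map_bind_aux _ hN (hameas s)]
    exact bind_map_aux _ ((hKmeas (s + 1)).comp (hameas s)) (hameas (s + 1))
  have hint : ∀ t, 1 ≤ t →
      ∫ x, altG g a t x ∂(pred π0 (altKernel K a) (altG g a) t) =
        ∫ x, g t x ∂(pred π0 (nudged K a) g t) := by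
    intro t ht
    rw [hpred t ht, integral_map (hameas t).aemeasurable
      (hgmeas t).aestronglyMeasurable]
    rfl
  refine ⟨hint, fun T _ => ?_⟩
  exact Finset.prod_congr rfl fun t ht => hint t (Finset.mem_Icc.mp ht).1

end Nudging
end
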